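/- arXiv:1012.1451 — 3 statements merged into one kernel-verified Lean document; each statement's English description precedes it below -/
import Mathlib

section
/- Let L be a finite graded lattice of rank n whose proper part has nonzero (n-2)-nd reduced homology over k. Then for every k ∈ {0,1,...,n}, L has at least binom(n,k) good elements of rank k, where an element x of rank j is called good if x = 0̂ or the order complex of the open interval (0̂, x) has nonzero (j-2)-nd reduced homology over k. -/
set_option maxSynthPendingDepth 2

open Finset

variable {α : Type*}

/-- A `j`-vertex simplex of the order complex of `s ⊆ α`: a strictly increasing
`j`-tuple of elements of `s` (for `j = 0` this is the unique empty simplex). -/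
def OrderedSimplex [Preorder α] (s : Set α) (j : ℕ) : Type _ :=
  {f : Fin j → α // StrictMono f ∧ ∀ i, f i ∈ s}

/-- The module of simplicial chains with `j` vertices (i.e. of degree `j - 1`)
of the order complex of `s`, with coefficients in `K`.  Since degree `j = 0`
corresponds to the empty simplex, this is the *augmented* chain complex. -/
abbrev SimpChains (K : Type*) [CommRing K] [Preorder α] (s : Set α) (j : ℕ) :=
  OrderedSimplex s j →₀ K

/-- The `i`-th face of a simplex (delete the `i`-th vertex). -/
def OrderedSimplex.face [Preorder α] {s : Set α} {j : ℕ}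
    (σ : OrderedSimplex s (j + 1)) (i : Fin (j + 1)) : OrderedSimplex s j :=
  ⟨σ.1 ∘ Fin.succAbove i, σ.2.1.comp (Fin.strictMono_succAbove i), fun _ => σ.2.2 _⟩

/-- The simplicial boundary map (for `j = 0` it is the augmentation). -/
noncomputable def simpBoundary (K : Type*) [CommRing K] [Preorder α] (s : Set α) (j : ℕ) :
    SimpChains K s (j + 1) →ₗ[K] SimpChains K s j :=
  Finsupp.lsum K fun σ => ∑ i : Fin (j + 1), ((-1 : K) ^ (i : ℕ)) • Finsupp.lsingle (σ.face i)

/-- Cycles with `j` vertices (for `j = 0` every chain is a cycle). -/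
noncomputable def simpCycles (K : Type*) [CommRing K] [Preorder α] (s : Set α) :
    (j : ℕ) → Submodule K (SimpChains K s j)
  | 0 => ⊤
  | (i + 1) => LinearMap.ker (simpBoundary K s i)

/-- Boundaries with `j` vertices. -/
noncomputable def simpBoundaries (K : Type*) [CommRing K] [Preorder α] (s : Set α) (j : ℕ) :
    Submodule K (SimpChains K s j) :=
  LinearMap.range (simpBoundary K s j)

/-- `ReducedHomology K s j` is the reduced simplicial homology group
`H̃_{j-1}(Δ(s); K)` of the order complex of `s` (the index `j` counts vertices,
so `j = 0` gives `H̃₋₁` and `j = n - 1` gives `H̃_{n-2}`). -/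
noncomputable def ReducedHomology (K : Type*) [CommRing K] [Preorder α] (s : Set α) (j : ℕ) :=
  ↥(simpCycles K s j) ⧸ (simpBoundaries K s j).comap (simpCycles K s j).subtype

noncomputable instance (K : Type*) [CommRing K] [Preorder α] (s : Set α) (j : ℕ) :
    AddCommGroup (ReducedHomology K s j) := by unfold ReducedHomology; infer_instance

noncomputable instance (K : Type*) [CommRing K] [Preorder α] (s : Set α) (j : ℕ) :
    Module K (ReducedHomology K s j) := by unfold ReducedHomology; infer_instance

/-- The proper part `L ∖ {⊥, ⊤}` of a bounded poset. -/
def properPart (α : Type*) [Preorder α] [BoundedOrder α] : Set α :=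
  {x | x ≠ ⊥ ∧ x ≠ ⊤}

/-- The flag `f`-vector entry `f_P(S)`: the number of chains in the proper part
of `P` whose set of ranks is exactly `S`. -/
noncomputable def flagf (α : Type*) [Preorder α] [BoundedOrder α] [GradeMinOrder ℕ α]
    (S : Finset ℕ) : ℕ :=
  Nat.card {C : Finset α // IsChain (· ≤ ·) (C : Set α) ∧ (↑C ⊆ properPart α) ∧
    C.image (grade ℕ) = S}

/-- The multinomial coefficient `α_n(S) = n! / (s₁!·(s₂-s₁)!⋯(n-s_l)!)`
for `S = {s₁ < s₂ < ⋯ < s_l} ⊆ [n-1]`; it equals `f_{B_n}(S)`. -/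
def alphaMulti (n : ℕ) (S : Finset ℕ) : ℕ :=
  n.factorial /
    ((S.sort (· ≤ ·) ++ [n]).zipWith (fun b a => (b - a).factorial)
      (0 :: S.sort (· ≤ ·))).prod

/-- An element `x` of a graded bounded poset is *good* if `x = ⊥` or the order
complex of the open interval `(⊥, x)` has nontrivial top reduced homology
`H̃_{ρ(x)-2}` over `K`. -/
def IsGoodElement (K : Type*) [CommRing K] [Preorder α] [OrderBot α] [GradeMinOrder ℕ α]
    (x : α) : Prop :=
  x = ⊥ ∨ Nontrivial (ReducedHomology K (Set.Ioo (⊥ : α) x) (grade ℕ x - 1))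

set_option linter.unusedSectionVars false

lemma covby_eq_of_le_of_lt {α : Type*} [PartialOrder α] {a b w : α} (h : a ⋖ b)
    (h1 : a ≤ w) (h2 : w < b) : w = a := by
  rcases h1.eq_or_lt with h3 | h3
  · exact h3.symm
  · exact absurd h2 (h.2 h3)

section Count
variable {α : Type*} [Lattice α] [Fintype α]

lemma flag_mono {M : ℕ} {c : ℕ → α} (hcov : ∀ i ≤ M, c i ⋖ c (i+1)) :
    ∀ i j, i ≤ j → j ≤ M + 1 → c i ≤ c j := by
  intro i j hij hj
  obtain ⟨d, rfl⟩ := Nat.exists_eq_add_of_le hij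
  clear hij
  induction d with
  | zero => exact le_rfl
  | succ d ih => exact le_trans (ih (by omega)) (hcov _ (by omega)).le

lemma ncard_one_le {s : Set α} (h : s.Nonempty) : 1 ≤ s.ncard := by
  have := (Set.ncard_pos (Set.toFinite s)).2 h; omega

lemma countLemma : ∀ (m : ℕ) (b t : α) (F : Set (ℕ → α)), F.Nonempty →
    (∀ c ∈ F, ∀ i ≤ m, c i ⋖ c (i+1)) →
    (∀ c ∈ F, c 0 = b) → (∀ c ∈ F, c (m+1) = t) →
    (∀ c ∈ F, ∀ j, 1 ≤ j → j ≤ m → ∃ c' ∈ F, c' j ≠ c j ∧ ∀ i, i ≠ j → c' i = c i) →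
    ∀ k ≤ m + 1, (m+1).choose k ≤ Set.ncard {x | ∃ c ∈ F, c k = x} := by
  intro m
  induction m with
  | zero =>
      intro b t F hne hcov hb ht hex k hk
      obtain ⟨c, hc⟩ := hne
      have h1 : (1).choose k = 1 := by interval_cases k <;> simp
      rw [h1]
      exact ncard_one_le ⟨c k, c, hc, rfl⟩
  | succ m IH =>
      intro b t F hne hcov hb ht hex k hk
      set M := m + 1 with hM
      rcases Nat.eq_zero_or_pos k with rfl | hk1
      · obtain ⟨c, hc⟩ := hne
        simpa using ncard_one_le (⟨c 0, c, hc, rfl⟩ : Set.Nonempty {x | ∃ c ∈ F, c 0 = x})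
      rcases Nat.lt_or_ge k (M+1) with hk2 | hk2
      swap
      · have hkeq : k = M + 1 := by omega
        subst hkeq
        obtain ⟨c, hc⟩ := hne
        simpa using ncard_one_le (⟨c (M+1), c, hc, rfl⟩ :
          Set.Nonempty {x | ∃ c ∈ F, c (M+1) = x})
      -- main case 1 ≤ k ≤ M
      have crux : ∃ a y, (∃ c ∈ F, c 1 = a) ∧ (∃ c ∈ F, c M = y) ∧ ¬ a ≤ y := by
        by_contra hcon
        push_neg at hcon
        have key : ∀ d, d ≤ M - 1 → ∀ c0 ∈ F, ∀ c ∈ F, c0 1 ≤ c (M - d) := by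
          intro d
          induction d with
          | zero => intro _ c0 hc0 c hc; exact hcon (c0 1) (c M) ⟨c0, hc0, rfl⟩ ⟨c, hc, rfl⟩
          | succ d ihd =>
              intro hd c0 hc0 c hc
              set j := M - d with hj'
              have hj : 2 ≤ j := by omega
              have hjM : j ≤ M := by omega
              obtain ⟨c', hc', hne', hagree⟩ := hex c hc j (by omega) hjM
              have h1 : c0 1 ≤ c j := ihd (by omega) c0 hc0 c hc
              have h2 : c0 1 ≤ c' j := ihd (by omega) c0 hc0 c' hc'
              have hwlt : c j ⊓ c' j < c j := by
                rcases lt_or_eq_of_le (inf_le_left : c j ⊓ c' j ≤ c j) with h | h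
                · exact h
                · exfalso
                  have h3 : c j ≤ c' j := by rw [← h]; exact inf_le_right
                  have h4 : c j < c' j := lt_of_le_of_ne h3 (Ne.symm hne')
                  have h5 : c' j < c (j+1) := by
                    rw [← hagree (j+1) (by omega)]
                    exact (hcov c' hc' j hjM).lt
                  exact (hcov c hc j hjM).2 h4 h5
              have hwge : c (j-1) ≤ c j ⊓ c' j := by
                refine le_inf (flag_mono (hcov c hc) _ _ (by omega) (by omega)) ?_
                rw [← hagree (j-1) (by omega)]
                exact flag_mono (hcov c' hc') _ _ (by omega) (by omega)
              have hcovj : c (j-1) ⋖ c j := by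
                have := hcov c hc (j-1) (by omega)
                rwa [Nat.sub_add_cancel (by omega)] at this
              have hw : c j ⊓ c' j = c (j-1) := covby_eq_of_le_of_lt hcovj hwge hwlt
              have : c0 1 ≤ c (j - 1) := by rw [← hw]; exact le_inf h1 h2
              have hjd : M - (d+1) = j - 1 := by omega
              rwa [hjd]
        -- all rank-1 values coincide, contradicting exchange at rank 1
        obtain ⟨c, hc⟩ := hne
        obtain ⟨c', hc', hne', _⟩ := hex c hc 1 le_rfl (by omega)
        have h1 : c' 1 ≤ c 1 := by
          have := key (M-1) le_rfl c' hc' c hc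
          rwa [show M - (M-1) = 1 by omega] at this
        have hcb : c 0 = b := hb c hc
        have hcb' : c' 0 = b := hb c' hc'
        have hcv : b ⋖ c 1 := by have := hcov c hc 0 (by omega); rwa [hcb] at this
        have hcv' : b ⋖ c' 1 := by have := hcov c' hc' 0 (by omega); rwa [hcb'] at this
        exact hcv.2 hcv'.lt (lt_of_le_of_ne h1 hne')
      obtain ⟨a, y, ⟨ca, hca, hca1⟩, ⟨cy, hcy, hcyM⟩, hay⟩ := crux
      set Fy : Set (ℕ → α) := {c | c ∈ F ∧ c M = y} with hFy
      have hy1 : ∀ k' ≤ m + 1, M.choose k' ≤ Set.ncard {x | ∃ c ∈ Fy, c k' = x} := by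
        apply IH b y Fy ⟨cy, hcy, hcyM⟩
        · intro c hc i hi; exact hcov c hc.1 i (by omega)
        · intro c hc; exact hb c hc.1
        · intro c hc; exact hc.2
        · intro c hc j hj1 hj2
          obtain ⟨c', hc', hne', hag⟩ := hex c hc.1 j hj1 (by omega)
          exact ⟨c', ⟨hc', by rw [hag M (by omega), hc.2]⟩, hne', hag⟩
      set Fa : Set (ℕ → α) := (fun (c : ℕ → α) (i : ℕ) => c (i+1)) '' {c | c ∈ F ∧ c 1 = a} with hFa
      have ha1 : ∀ k' ≤ m + 1, M.choose k' ≤ Set.ncard {x | ∃ c ∈ Fa, c k' = x} := by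
        apply IH a t Fa ⟨_, ⟨ca, ⟨hca, hca1⟩, rfl⟩⟩
        · rintro _ ⟨c, hc, rfl⟩ i hi; exact hcov c hc.1 (i+1) (by omega)
        · rintro _ ⟨c, hc, rfl⟩; exact hc.2
        · rintro _ ⟨c, hc, rfl⟩; exact ht c hc.1
        · rintro _ ⟨c, hc, rfl⟩ j hj1 hj2
          obtain ⟨c', hc', hne', hag⟩ := hex c hc.1 (j+1) (by omega) (by omega)
          refine ⟨_, ⟨c', ⟨hc', by rw [hag 1 (by omega), hc.2]⟩, rfl⟩, hne', ?_⟩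
          intro i hi; exact hag (i+1) (by omega)
      have hVy := hy1 k (by omega)
      have hk3 : k - 1 ≤ m + 1 := by clear hVy ha1 hy1 hFa Fa hFy Fy; omega
      have hVa := ha1 (k-1) hk3
      set Vy := {x | ∃ c ∈ Fy, c k = x} with hVydef
      set Va := {x | ∃ c ∈ Fa, c (k-1) = x} with hVadef
      have hsub : Vy ∪ Va ⊆ {x | ∃ c ∈ F, c k = x} := by
        rintro x (⟨c, hc, rfl⟩ | ⟨_, ⟨c, hc, rfl⟩, rfl⟩)
        · exact ⟨c, hc.1, rfl⟩
        · exact ⟨c, hc.1, by show c k = c (k-1+1); congr 1; omega⟩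
      have hdisj : Disjoint Vy Va := by
        rw [Set.disjoint_left]
        rintro x ⟨c, hc, rfl⟩ ⟨_, ⟨c', hc', rfl⟩, hx⟩
        apply hay
        calc a = c' 1 := hc'.2.symm
        _ ≤ c' (k-1+1) := flag_mono (hcov c' hc'.1) 1 _ (by omega) (by omega)
        _ = c k := hx
        _ ≤ c M := flag_mono (hcov c hc.1) k M (by omega) (by omega)
        _ = y := hc.2
      have hchoose : (M+1).choose k = M.choose k + M.choose (k-1) := by
        obtain ⟨k', rfl⟩ : ∃ k', k = k' + 1 := ⟨k-1, by omega⟩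
        rw [Nat.choose_succ_succ, Nat.add_sub_cancel, Nat.add_comm]
      calc (M+1).choose k = M.choose k + M.choose (k-1) := hchoose
      _ ≤ Vy.ncard + Va.ncard := Nat.add_le_add hVy hVa
      _ = (Vy ∪ Va).ncard := (Set.ncard_union_eq hdisj (Set.toFinite _) (Set.toFinite _)).symm
      _ ≤ _ := Set.ncard_le_ncard hsub (Set.toFinite _)

end Count

section HomologyAux
variable {α : Type*}

lemma OrderedSimplex.ext' [Preorder α] {s : Set α} {j : ℕ} {σ τ : OrderedSimplex s j}
    (h : ∀ i, σ.1 i = τ.1 i) : σ = τ := Subtype.ext (funext h)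

lemma succAbove_val {n : ℕ} (i : Fin (n+1)) (l : Fin n) :
    (i.succAbove l).val = if l.val < i.val then l.val else l.val + 1 := by
  simp [Fin.succAbove, Fin.lt_def]; split <;> simp

lemma face_val [Preorder α] {s : Set α} {j : ℕ} (σ : OrderedSimplex s (j+1)) (i : Fin (j+1))
    (l : Fin j) :
    (σ.face i).1 l
      = σ.1 ⟨if l.val < i.val then l.val else l.val + 1, by have := l.isLt; split <;> omega⟩ := by
  show σ.1 (i.succAbove l) = _
  apply congrArg
  apply Fin.ext
  rw [succAbove_val]

section Grade
variable [PartialOrder α] [BoundedOrder α] [GradeMinOrder ℕ α]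

lemma grade_lower {M : ℕ} (f : Fin M → α) (hf : StrictMono f) (hb : ∀ i, (⊥:α) < f i) :
    ∀ v (h : v < M), v + 1 ≤ grade ℕ (f ⟨v, h⟩) := by
  have gsm : StrictMono (grade ℕ : α → ℕ) := grade_strictMono
  intro v
  induction v with
  | zero =>
      intro h
      have := gsm (hb ⟨0, h⟩)
      rw [grade_bot] at this; omega
  | succ v ih =>
      intro h
      have h1 := ih (by omega)
      have h2 : f ⟨v, by omega⟩ < f ⟨v+1, h⟩ := hf (by simp [Fin.lt_def])
      have := gsm h2; omega

lemma interval_simplex_empty {k : ℕ} (hk : 1 ≤ k) (x : α) (hx : grade ℕ x = k) :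
    IsEmpty (OrderedSimplex (Set.Ioo (⊥:α) x) k) := by
  have gsm : StrictMono (grade ℕ : α → ℕ) := grade_strictMono
  constructor; intro σ
  have hlt : k - 1 < k := by omega
  have h1 := grade_lower σ.1 σ.2.1 (fun i => (σ.2.2 i).1) (k-1) hlt
  have h2 : σ.1 ⟨k-1, hlt⟩ < x := (σ.2.2 _).2
  have h3 := gsm h2
  omega

lemma simplex_grade {m : ℕ} (hrank : grade ℕ (⊤ : α) = m + 2)
    (σ : OrderedSimplex (properPart α) (m+1)) (i : Fin (m+1)) :
    grade ℕ (σ.1 i) = i.val + 1 := by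
  have gsm : StrictMono (grade ℕ : α → ℕ) := grade_strictMono
  have h1 := grade_lower σ.1 σ.2.1
    (fun i => bot_lt_iff_ne_bot.2 (σ.2.2 i).1) i.val i.isLt
  -- upper bound : grade (σ.1 i) + (m - i.val) < m + 2
  have h2 : ∀ d v (h : v < m+1), m - v = d → grade ℕ (σ.1 ⟨v, h⟩) + d < m + 2 := by
    intro d
    induction d with
    | zero =>
        intro v h hd
        have h3 : σ.1 ⟨v, h⟩ < ⊤ := lt_top_iff_ne_top.2 (σ.2.2 _).2
        have := gsm h3; rw [hrank] at this; omega
    | succ d ih =>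
        intro v h hd
        have h2 : v + 1 < m + 1 := by omega
        have h4 := ih (v+1) h2 (by omega)
        have h3 : σ.1 ⟨v,h⟩ < σ.1 ⟨v+1,h2⟩ := σ.2.1 (by simp [Fin.lt_def])
        have := gsm h3; omega
  have h2' := h2 (m - i.val) i.val i.isLt rfl
  simp only [Fin.eta] at h1 h2'
  have := i.isLt
  omega

end Grade

lemma finsupp_empty_eq_zero {ι M : Type*} [IsEmpty ι] [AddCommMonoid M] (f : ι →₀ M) : f = 0 :=
  Finsupp.ext (fun a => isEmptyElim a)

section Chains
attribute [local instance] Classical.propDecidable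
variable {K : Type*} [CommRing K] [Preorder α] {s : Set α}

lemma boundaries_eq_bot (j : ℕ) (h : IsEmpty (OrderedSimplex s (j+1))) :
    simpBoundaries K s j = ⊥ := by
  rw [eq_bot_iff]
  intro y hy
  obtain ⟨w, rfl⟩ := hy
  rw [finsupp_empty_eq_zero w, map_zero]
  exact Submodule.zero_mem ⊥

lemma reduced_homology_nontrivial (j : ℕ)
    (hb : simpBoundaries K s j = ⊥) (z : SimpChains K s j) (hz : z ∈ simpCycles K s j)
    (hz0 : z ≠ 0) : Nontrivial (ReducedHomology K s j) := by
  have : Nontrivial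
      (↥(simpCycles K s j) ⧸ (simpBoundaries K s j).comap (simpCycles K s j).subtype) := by
    refine ⟨Submodule.Quotient.mk ⟨z, hz⟩, 0, fun h => ?_⟩
    rw [Submodule.Quotient.mk_eq_zero] at h
    have h2 : z ∈ simpBoundaries K s j := h
    rw [hb] at h2
    exact hz0 ((Submodule.mem_bot K).1 h2)
  exact this

lemma exists_cycle (j : ℕ) (h : Nontrivial (ReducedHomology K s j)) :
    ∃ z : SimpChains K s j, z ∈ simpCycles K s j ∧ z ∉ simpBoundaries K s j := by
  have h' : Nontrivial
      (↥(simpCycles K s j) ⧸ (simpBoundaries K s j).comap (simpCycles K s j).subtype) := h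
  obtain ⟨q, hq⟩ := exists_ne (0 : ↥(simpCycles K s j) ⧸
      (simpBoundaries K s j).comap (simpCycles K s j).subtype)
  obtain ⟨w, rfl⟩ := Submodule.Quotient.mk_surjective _ q
  refine ⟨w.1, w.2, fun hw => hq ?_⟩
  rw [Submodule.Quotient.mk_eq_zero]
  exact hw

lemma simpBoundary_single (j : ℕ) (a : OrderedSimplex s (j+1)) (r : K)
    (d : OrderedSimplex s j) :
    (simpBoundary K s j (Finsupp.single a r)) d
      = ∑ i : Fin (j+1), (-1:K)^(i:ℕ) * (if a.face i = d then r else 0) := by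
  simp only [simpBoundary, Finsupp.lsum_single, LinearMap.sum_apply, Finsupp.finset_sum_apply,
    LinearMap.smul_apply, Finsupp.lsingle_apply, Finsupp.smul_apply, Finsupp.single_apply,
    smul_eq_mul, mul_ite, mul_zero]

lemma simpBoundary_apply (j : ℕ) (z : SimpChains K s (j+1)) (d : OrderedSimplex s j) :
    (simpBoundary K s j z) d
      = ∑ σ ∈ z.support, ∑ i : Fin (j+1), (-1:K)^(i:ℕ) * (if σ.face i = d then z σ else 0) := by
  classical
  conv_lhs => rw [← Finsupp.sum_single z]
  rw [Finsupp.sum, map_sum, Finsupp.finset_sum_apply]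
  exact Finset.sum_congr rfl fun σ _ => simpBoundary_single j σ (z σ) d

end Chains
end HomologyAux


section FaceVal
variable {α : Type*}

lemma face_val_lt [Preorder α] {s : Set α} {j : ℕ} (σ : OrderedSimplex s (j+1)) (i : Fin (j+1))
    (l : Fin j) (l' : Fin (j+1)) (hl' : l'.val = l.val) (h : l.val < i.val) :
    (σ.face i).1 l = σ.1 l' := by
  rw [face_val]; apply congrArg; apply Fin.ext; simp [h, hl']

lemma face_val_ge [Preorder α] {s : Set α} {j : ℕ} (σ : OrderedSimplex s (j+1)) (i : Fin (j+1))
    (l : Fin j) (l' : Fin (j+1)) (hl' : l'.val = l.val + 1) (h : ¬ l.val < i.val) :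
    (σ.face i).1 l = σ.1 l' := by
  rw [face_val]; apply congrArg; apply Fin.ext; simp [h, hl']

end FaceVal

section Main
attribute [local instance] Classical.propDecidable
variable {α : Type*} [Lattice α] [BoundedOrder α] [Fintype α] [GradeMinOrder ℕ α]
variable {K : Type*} [Field K]

lemma exchange_lemma {m : ℕ} (hrank : grade ℕ (⊤ : α) = m + 2)
    (z : SimpChains K (properPart α) (m+1))
    (hz : simpBoundary K (properPart α) m z = 0)
    (c : OrderedSimplex (properPart α) (m+1)) (hc : z c ≠ 0) (j : Fin (m+1)) :
    ∃ σ : OrderedSimplex (properPart α) (m+1),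
      z σ ≠ 0 ∧ σ.1 j ≠ c.1 j ∧ ∀ i, i ≠ j → σ.1 i = c.1 i := by
  have key : ∀ (σ : OrderedSimplex (properPart α) (m+1)) (i : Fin (m+1)),
      σ.face i = c.face j → i = j := by
    intro σ i hfd
    by_contra hij
    rcases lt_or_gt_of_ne (fun h : i.val = j.val => hij (Fin.ext h)) with hlt | hlt
    · have hb : i.val < m := by have := j.isLt; omega
      have hbm : i.val < m + 1 := by omega
      have hbm2 : i.val + 1 < m + 1 := by omega
      have h1 : (σ.face i).1 ⟨i.val, hb⟩ = σ.1 ⟨i.val+1, hbm2⟩ :=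
        face_val_ge σ i ⟨i.val, hb⟩ ⟨i.val+1, hbm2⟩ rfl (by simp)
      have h2 : (c.face j).1 ⟨i.val, hb⟩ = c.1 ⟨i.val, hbm⟩ :=
        face_val_lt c j ⟨i.val, hb⟩ ⟨i.val, hbm⟩ rfl (by simpa using hlt)
      have h3 : (σ.face i).1 ⟨i.val, hb⟩ = (c.face j).1 ⟨i.val, hb⟩ := by rw [hfd]
      have h4 : σ.1 ⟨i.val+1, hbm2⟩ = c.1 ⟨i.val, hbm⟩ := h1.symm.trans (h3.trans h2)
      have e1 := simplex_grade hrank σ ⟨i.val+1, hbm2⟩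
      have e2 := simplex_grade hrank c ⟨i.val, hbm⟩
      rw [h4, e2] at e1
      simp at e1
    · have hb : j.val < m := by have := i.isLt; omega
      have hbm : j.val < m + 1 := by omega
      have hbm2 : j.val + 1 < m + 1 := by omega
      have h1 : (σ.face i).1 ⟨j.val, hb⟩ = σ.1 ⟨j.val, hbm⟩ :=
        face_val_lt σ i ⟨j.val, hb⟩ ⟨j.val, hbm⟩ rfl (by simpa using hlt)
      have h2 : (c.face j).1 ⟨j.val, hb⟩ = c.1 ⟨j.val+1, hbm2⟩ :=
        face_val_ge c j ⟨j.val, hb⟩ ⟨j.val+1, hbm2⟩ rfl (by simp)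
      have h3 : (σ.face i).1 ⟨j.val, hb⟩ = (c.face j).1 ⟨j.val, hb⟩ := by rw [hfd]
      have h4 : σ.1 ⟨j.val, hbm⟩ = c.1 ⟨j.val+1, hbm2⟩ := h1.symm.trans (h3.trans h2)
      have e1 := simplex_grade hrank σ ⟨j.val, hbm⟩
      have e2 := simplex_grade hrank c ⟨j.val+1, hbm2⟩
      rw [h4, e2] at e1
      simp at e1
  -- from the cycle condition, the coefficients of chains through c.face j sum to zero
  have hsum : ∑ σ ∈ z.support, (if σ.face j = c.face j then z σ else 0) = 0 := by
    have h0 := simpBoundary_apply m z (c.face j)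
    rw [hz, Finsupp.zero_apply] at h0
    have h1 : ∀ σ ∈ z.support,
        (∑ i : Fin (m+1), (-1:K)^(i:ℕ) * (if σ.face i = c.face j then z σ else 0))
          = (-1:K)^(j:ℕ) * (if σ.face j = c.face j then z σ else 0) := by
      intro σ _
      apply Finset.sum_eq_single j
      · intro i _ hij
        rw [if_neg (fun h => hij (key σ i h)), mul_zero]
      · intro h; exact absurd (Finset.mem_univ j) h
    rw [Finset.sum_congr rfl h1, ← Finset.mul_sum] at h0
    rcases mul_eq_zero.1 h0.symm with h | h
    · exact absurd h (pow_ne_zero _ (neg_ne_zero.2 one_ne_zero))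
    · exact h
  have hexists : ∃ σ ∈ z.support, σ ≠ c ∧ σ.face j = c.face j := by
    by_contra hcon
    push_neg at hcon
    rw [Finset.sum_eq_single c (fun σ hσ hne => if_neg (hcon σ hσ hne)) 
      (fun h => absurd (Finsupp.mem_support_iff.2 hc) h), if_pos rfl] at hsum
    exact hc hsum
  obtain ⟨σ, hσs, hσc, hface⟩ := hexists
  have agree : ∀ i, i ≠ j → σ.1 i = c.1 i := by
    intro i hij
    rcases lt_or_gt_of_ne (fun h : i.val = j.val => hij (Fin.ext h)) with hlt | hlt
    · have hb : i.val < m := by have := j.isLt; omega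
      have h1 : (σ.face j).1 ⟨i.val, hb⟩ = σ.1 i :=
        face_val_lt σ j ⟨i.val, hb⟩ i rfl (by simpa using hlt)
      have h2 : (c.face j).1 ⟨i.val, hb⟩ = c.1 i :=
        face_val_lt c j ⟨i.val, hb⟩ i rfl (by simpa using hlt)
      rw [← h1, ← h2, hface]
    · have hge : 1 ≤ i.val := by omega
      have hb : i.val - 1 < m := by have := i.isLt; omega
      have h1 : (σ.face j).1 ⟨i.val - 1, hb⟩ = σ.1 i :=
        face_val_ge σ j ⟨i.val - 1, hb⟩ i (by show i.val = i.val - 1 + 1; omega)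
          (by show ¬ (i.val - 1 < j.val); omega)
      have h2 : (c.face j).1 ⟨i.val - 1, hb⟩ = c.1 i :=
        face_val_ge c j ⟨i.val - 1, hb⟩ i (by show i.val = i.val - 1 + 1; omega)
          (by show ¬ (i.val - 1 < j.val); omega)
      rw [← h1, ← h2, hface]
  refine ⟨σ, Finsupp.mem_support_iff.1 hσs, ?_, agree⟩
  intro h
  apply hσc
  apply OrderedSimplex.ext'
  intro i
  by_cases hij : i = j
  · rw [hij]; exact h
  · exact agree i hij

lemma good_of_support {m : ℕ} (hrank : grade ℕ (⊤ : α) = m + 2)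
    (z : SimpChains K (properPart α) (m+1))
    (hz : simpBoundary K (properPart α) m z = 0)
    (c : OrderedSimplex (properPart α) (m+1)) (hc : z c ≠ 0)
    (q : Fin (m+1)) : IsGoodElement K (c.1 q) := by
  obtain ⟨v, hvlt⟩ := q
  right
  have hgx : grade ℕ (c.1 ⟨v, hvlt⟩) = v + 1 := simplex_grade hrank c ⟨v, hvlt⟩
  rw [hgx, Nat.add_sub_cancel]
  rcases Nat.eq_zero_or_pos v with rfl | hv1
  · -- rank-one case : the interval (⊥, x) is empty, H̃₋₁ ≠ 0
    have hempty : IsEmpty (OrderedSimplex (Set.Ioo (⊥:α) (c.1 ⟨0, hvlt⟩)) 1) :=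
      interval_simplex_empty le_rfl _ (by omega)
    exact reduced_homology_nontrivial 0 (boundaries_eq_bot 0 hempty)
      (Finsupp.single ⟨fun i => i.elim0, fun a => a.elim0, fun a => a.elim0⟩ 1)
      Submodule.mem_top (fun h0 => one_ne_zero (Finsupp.single_eq_zero.1 h0))
  -- main case : v = p + 1
  obtain ⟨p, rfl⟩ : ∃ p, v = p + 1 := ⟨v - 1, by omega⟩
  set x := c.1 ⟨p+1, hvlt⟩ with hxdef
  have hgx2 : grade ℕ x = p + 2 := by omega
  have hple : p + 1 ≤ m + 1 := by omega
  have hpm : p < m := by omega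
  -- the agreement predicate
  set P : OrderedSimplex (properPart α) (m+1) → Prop :=
    (fun σ => ∀ i : Fin (m+1), p + 1 ≤ i.val → σ.1 i = c.1 i) with hPdef
  -- lower truncation of a simplex agreeing with c above level p+1
  have truncAux : ∀ (σ : OrderedSimplex (properPart α) (m+1)), P σ →
      (StrictMono (fun l : Fin (p+1) => σ.1 ⟨l.val, by omega⟩) ∧
        ∀ l : Fin (p+1), σ.1 ⟨l.val, by omega⟩ ∈ Set.Ioo (⊥:α) x) := by
    intro σ hσ
    constructor
    · intro a b hab
      exact σ.2.1 hab
    · intro l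
      refine ⟨bot_lt_iff_ne_bot.2 (σ.2.2 _).1, ?_⟩
      have h1 : σ.1 ⟨l.val, by omega⟩ < σ.1 ⟨p+1, hvlt⟩ := σ.2.1 l.isLt
      have h2 : σ.1 ⟨p+1, hvlt⟩ = c.1 ⟨p+1, hvlt⟩ := hσ ⟨p+1, hvlt⟩ le_rfl
      exact lt_of_lt_of_eq h1 h2
  let trunc : (σ : OrderedSimplex (properPart α) (m+1)) → P σ →
      OrderedSimplex (Set.Ioo (⊥:α) x) (p+1) :=
    fun σ hσ => ⟨fun l : Fin (p+1) => σ.1 ⟨l.val, by omega⟩,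
      (truncAux σ hσ).1, (truncAux σ hσ).2⟩
  have trunc_val : ∀ σ hσ (l : Fin (p+1)) (l' : Fin (m+1)), l'.val = l.val →
      (trunc σ hσ).1 l = σ.1 l' := by
    intro σ hσ l l' hl'
    show σ.1 _ = σ.1 l'
    apply congrArg; apply Fin.ext; simp [hl']
  -- gluing a simplex of (⊥, x) with the top part of c
  have glueAux : ∀ (τ : OrderedSimplex (Set.Ioo (⊥:α) x) p),
      (StrictMono (fun l : Fin m =>
          if hl : l.val < p then τ.1 ⟨l.val, hl⟩ else c.1 ⟨l.val+1, by omega⟩) ∧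
        ∀ l : Fin m, (if hl : l.val < p then τ.1 ⟨l.val, hl⟩ else c.1 ⟨l.val+1, by omega⟩)
          ∈ properPart α) := by
    intro τ
    constructor
    · intro a b hab
      have hab' : a.val < b.val := hab
      show (if hl : a.val < p then τ.1 ⟨a.val, hl⟩ else c.1 ⟨a.val+1, by omega⟩)
        < (if hl : b.val < p then τ.1 ⟨b.val, hl⟩ else c.1 ⟨b.val+1, by omega⟩)
      split_ifs with h1 h2 h2
      · exact τ.2.1 (show (⟨a.val, h1⟩ : Fin p) < ⟨b.val, h2⟩ from hab')
      · refine lt_of_lt_of_le (τ.2.2 ⟨a.val, h1⟩).2 ?_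
        exact c.2.1.monotone (show (⟨p+1, hvlt⟩ : Fin (m+1)) ≤ ⟨b.val+1, by omega⟩ from by
          show p + 1 ≤ b.val + 1; omega)
      · exact absurd hab' (by omega)
      · exact c.2.1 (show (⟨a.val+1, by omega⟩ : Fin (m+1)) < ⟨b.val+1, by omega⟩ from by
          show a.val + 1 < b.val + 1; omega)
    · intro l
      split_ifs with h1
      · exact ⟨(τ.2.2 _).1.ne', ne_top_of_lt (τ.2.2 _).2⟩
      · exact c.2.2 _
  let glue : OrderedSimplex (Set.Ioo (⊥:α) x) p → OrderedSimplex (properPart α) m :=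
    fun τ => ⟨fun l : Fin m =>
      if hl : l.val < p then τ.1 ⟨l.val, hl⟩ else c.1 ⟨l.val+1, by omega⟩,
      (glueAux τ).1, (glueAux τ).2⟩
  have glue_lt : ∀ τ (l : Fin m) (hl : l.val < p), (glue τ).1 l = τ.1 ⟨l.val, hl⟩ := by
    intro τ l hl
    show (if h : l.val < p then τ.1 ⟨l.val, h⟩ else c.1 ⟨l.val+1, by omega⟩) = _
    rw [dif_pos hl]
  have glue_ge : ∀ τ (l : Fin m) (hl : ¬ l.val < p) (l' : Fin (m+1)), l'.val = l.val + 1 →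
      (glue τ).1 l = c.1 l' := by
    intro τ l hl l' hl'
    show (if h : l.val < p then τ.1 ⟨l.val, h⟩ else c.1 ⟨l.val+1, by omega⟩) = _
    rw [dif_neg hl]
    apply congrArg; apply Fin.ext; simp [hl']
  -- forcing lemmas
  have hB2a : ∀ (σ : OrderedSimplex (properPart α) (m+1)) (i : Fin (m+1)) τ,
      σ.face i = glue τ → i.val ≤ p := by
    intro σ i τ hfg
    by_contra hip
    push_neg at hip
    have hpm1 : p < m + 1 := by omega
    have hpm2 : p + 1 < m + 1 := by omega
    have h1 : (σ.face i).1 ⟨p, hpm⟩ = σ.1 ⟨p, hpm1⟩ :=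
      face_val_lt σ i ⟨p, hpm⟩ ⟨p, hpm1⟩ rfl (by show p < i.val; omega)
    have h2 : (glue τ).1 ⟨p, hpm⟩ = c.1 ⟨p+1, hpm2⟩ :=
      glue_ge τ ⟨p, hpm⟩ (by show ¬ p < p; omega) ⟨p+1, hpm2⟩ rfl
    have h3 : (σ.face i).1 ⟨p, hpm⟩ = (glue τ).1 ⟨p, hpm⟩ := by rw [hfg]
    have h4 : σ.1 ⟨p, hpm1⟩ = c.1 ⟨p+1, hpm2⟩ := h1.symm.trans (h3.trans h2)
    have e1 := simplex_grade hrank σ ⟨p, hpm1⟩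
    have e2 := simplex_grade hrank c ⟨p+1, hpm2⟩
    rw [h4, e2] at e1
    simp at e1
  have hB2b : ∀ σ (i : Fin (m+1)) τ, σ.face i = glue τ → P σ := by
    intro σ i τ hfg
    have hip := hB2a σ i τ hfg
    intro idx hidx
    have hl : idx.val - 1 < m := by have := idx.isLt; omega
    have h1 : (σ.face i).1 ⟨idx.val - 1, hl⟩ = σ.1 idx :=
      face_val_ge σ i ⟨idx.val - 1, hl⟩ idx (by show idx.val = idx.val - 1 + 1; omega)
        (by show ¬ idx.val - 1 < i.val; omega)
    have h2 : (glue τ).1 ⟨idx.val - 1, hl⟩ = c.1 idx :=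
      glue_ge τ ⟨idx.val - 1, hl⟩ (by show ¬ idx.val - 1 < p; omega) idx
        (by show idx.val = idx.val - 1 + 1; omega)
    have h3 : (σ.face i).1 ⟨idx.val - 1, hl⟩ = (glue τ).1 ⟨idx.val - 1, hl⟩ := by rw [hfg]
    exact (h1.symm.trans h3).trans h2
  have hB2c : ∀ σ (hσ : P σ) (i : Fin (m+1)), i.val ≤ p → ∀ (i' : Fin (p+1)), i'.val = i.val →
      ∀ τ, (σ.face i = glue τ ↔ (trunc σ hσ).face i' = τ) := by
    intro σ hσ i hip i' hi' τ
    constructor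
    · intro hfg
      apply OrderedSimplex.ext'
      intro l
      have hlm : l.val < m := by have := l.isLt; omega
      have h3 : (σ.face i).1 ⟨l.val, hlm⟩ = (glue τ).1 ⟨l.val, hlm⟩ := by rw [hfg]
      have hgl : (glue τ).1 ⟨l.val, hlm⟩ = τ.1 l := by
        rw [glue_lt τ ⟨l.val, hlm⟩ (by show l.val < p; exact l.isLt)]
      by_cases hli : l.val < i.val
      · have hlp1 : l.val < p + 1 := by omega
        have hlm1 : l.val < m + 1 := by omega
        calc ((trunc σ hσ).face i').1 l
            = (trunc σ hσ).1 ⟨l.val, hlp1⟩ :=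
              face_val_lt _ i' l ⟨l.val, hlp1⟩ rfl (by show l.val < i'.val; omega)
          _ = σ.1 ⟨l.val, hlm1⟩ := trunc_val σ hσ _ _ rfl
          _ = (σ.face i).1 ⟨l.val, hlm⟩ :=
              (face_val_lt σ i ⟨l.val, hlm⟩ ⟨l.val, hlm1⟩ rfl (by show l.val < i.val; omega)).symm
          _ = (glue τ).1 ⟨l.val, hlm⟩ := h3
          _ = τ.1 l := hgl
      · have hlp2 : l.val + 1 < p + 1 := by have := l.isLt; omega
        have hlm2 : l.val + 1 < m + 1 := by omega
        calc ((trunc σ hσ).face i').1 l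
            = (trunc σ hσ).1 ⟨l.val+1, hlp2⟩ :=
              face_val_ge _ i' l ⟨l.val+1, hlp2⟩ rfl (by show ¬ l.val < i'.val; omega)
          _ = σ.1 ⟨l.val+1, hlm2⟩ := trunc_val σ hσ _ _ rfl
          _ = (σ.face i).1 ⟨l.val, hlm⟩ :=
              (face_val_ge σ i ⟨l.val, hlm⟩ ⟨l.val+1, hlm2⟩ rfl (by show ¬ l.val < i.val; omega)).symm
          _ = (glue τ).1 ⟨l.val, hlm⟩ := h3
          _ = τ.1 l := hgl
    · intro htf
      apply OrderedSimplex.ext'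
      intro l
      by_cases hl : l.val < p
      · have h3 : ((trunc σ hσ).face i').1 ⟨l.val, hl⟩ = τ.1 ⟨l.val, hl⟩ := by rw [htf]
        have hgl : (glue τ).1 l = τ.1 ⟨l.val, hl⟩ := glue_lt τ l hl
        by_cases hli : l.val < i.val
        · have hlp1 : l.val < p + 1 := by omega
          have hlm1 : l.val < m + 1 := by have := l.isLt; omega
          calc (σ.face i).1 l
              = σ.1 ⟨l.val, hlm1⟩ := face_val_lt σ i l ⟨l.val, hlm1⟩ rfl hli
            _ = (trunc σ hσ).1 ⟨l.val, hlp1⟩ := (trunc_val σ hσ ⟨l.val, hlp1⟩ ⟨l.val, hlm1⟩ rfl).symm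
            _ = ((trunc σ hσ).face i').1 ⟨l.val, hl⟩ :=
                (face_val_lt _ i' ⟨l.val, hl⟩ ⟨l.val, hlp1⟩ rfl (by show l.val < i'.val; omega)).symm
            _ = τ.1 ⟨l.val, hl⟩ := h3
            _ = (glue τ).1 l := hgl.symm
        · have hlp2 : l.val + 1 < p + 1 := by omega
          have hlm2 : l.val + 1 < m + 1 := by have := l.isLt; omega
          calc (σ.face i).1 l
              = σ.1 ⟨l.val+1, hlm2⟩ := face_val_ge σ i l ⟨l.val+1, hlm2⟩ rfl hli
            _ = (trunc σ hσ).1 ⟨l.val+1, hlp2⟩ :=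
                (trunc_val σ hσ ⟨l.val+1, hlp2⟩ ⟨l.val+1, hlm2⟩ rfl).symm
            _ = ((trunc σ hσ).face i').1 ⟨l.val, hl⟩ :=
                (face_val_ge _ i' ⟨l.val, hl⟩ ⟨l.val+1, hlp2⟩ rfl (by show ¬ l.val < i'.val; omega)).symm
            _ = τ.1 ⟨l.val, hl⟩ := h3
            _ = (glue τ).1 l := hgl.symm
      · have hlm2 : l.val + 1 < m + 1 := by have := l.isLt; omega
        calc (σ.face i).1 l
            = σ.1 ⟨l.val+1, hlm2⟩ :=
              face_val_ge σ i l ⟨l.val+1, hlm2⟩ rfl (by show ¬ l.val < i.val; omega)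
          _ = c.1 ⟨l.val+1, hlm2⟩ := hσ ⟨l.val+1, hlm2⟩ (by show p + 1 ≤ l.val + 1; omega)
          _ = (glue τ).1 l := (glue_ge τ l hl ⟨l.val+1, hlm2⟩ rfl).symm
  -- the truncated chain
  set Tz : SimpChains K (Set.Ioo (⊥:α) x) (p+1) :=
    z.sum (fun σ r => if h : P σ then Finsupp.single (trunc σ h) r else 0) with hTzdef
  have hPc : P c := fun i _ => rfl
  -- T z is nonzero
  have hval : Tz (trunc c hPc) = z c := by
    rw [hTzdef, Finsupp.sum_apply, Finsupp.sum]
    rw [Finset.sum_eq_single c]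
    · rw [dif_pos hPc, Finsupp.single_apply, if_pos rfl]
    · intro σ hσ hne
      by_cases h : P σ
      · rw [dif_pos h, Finsupp.single_apply, if_neg]
        intro heq
        apply hne
        apply OrderedSimplex.ext'
        intro i
        by_cases hi : p + 1 ≤ i.val
        · rw [h i hi, hPc i hi]
        · have hi' : i.val < p + 1 := by omega
          have h5 : (trunc σ h).1 ⟨i.val, hi'⟩ = (trunc c hPc).1 ⟨i.val, hi'⟩ := by rw [heq]
          have h6 := trunc_val σ h ⟨i.val, hi'⟩ i rfl
          have h7 := trunc_val c hPc ⟨i.val, hi'⟩ i rfl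
          rw [← h6, ← h7, h5]
      · rw [dif_neg h]; rfl
    · intro hcs; exact absurd (Finsupp.mem_support_iff.2 hc) hcs
  have hTz_ne : Tz ≠ 0 := by
    intro h0
    rw [h0, Finsupp.zero_apply] at hval
    exact hc hval.symm
  -- T z is a cycle
  have hTz_cycle : simpBoundary K (Set.Ioo (⊥:α) x) p Tz = 0 := by
    apply Finsupp.ext
    intro τ
    rw [Finsupp.zero_apply]
    have hmain : (simpBoundary K (Set.Ioo (⊥:α) x) p Tz) τ
        = (simpBoundary K (properPart α) m z) (glue τ) := by
      rw [hTzdef, map_finsuppSum, Finsupp.sum_apply, Finsupp.sum,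
        simpBoundary_apply m z (glue τ)]
      apply Finset.sum_congr rfl
      intro σ hσ
      by_cases h : P σ
      · rw [dif_pos h, simpBoundary_single]
        -- reindex the sum over Fin (m+1) to Fin (p+1)
        have hreindex : ∑ i ∈ Finset.univ.map (Fin.castLEEmb hple),
            ((-1:K)^(i:ℕ) * (if σ.face i = glue τ then z σ else 0))
            = ∑ i : Fin (m+1), (-1:K)^(i:ℕ) * (if σ.face i = glue τ then z σ else 0) := by
          apply Finset.sum_subset (Finset.subset_univ _)
          intro i _ hnot
          have hge : p + 1 ≤ i.val := by
            by_contra hip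
            push_neg at hip
            exact hnot (Finset.mem_map.2 ⟨⟨i.val, hip⟩, Finset.mem_univ _, Fin.ext rfl⟩)
          rw [if_neg, mul_zero]
          intro hfg
          have := hB2a σ i τ hfg
          omega
        rw [← hreindex, Finset.sum_map]
        apply Finset.sum_congr rfl
        intro i' _
        have hiple : i'.val ≤ p := by have := i'.isLt; omega
        have hiff := hB2c σ h ((Fin.castLEEmb hple) i')
          (by show i'.val ≤ p; exact hiple) i' rfl τ
        rw [if_congr hiff.symm rfl rfl]
        rfl
      · rw [dif_neg h, map_zero, Finsupp.zero_apply]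
        symm
        apply Finset.sum_eq_zero
        intro i _
        rw [if_neg (fun hfg => h (hB2b σ i τ hfg)), mul_zero]
    rw [hmain, hz, Finsupp.zero_apply]
  -- conclude
  have hempty2 : IsEmpty (OrderedSimplex (Set.Ioo (⊥:α) x) (p+1+1)) :=
    interval_simplex_empty (by omega) x (by omega)
  exact reduced_homology_nontrivial (p+1) (boundaries_eq_bot (p+1) hempty2) Tz
    (LinearMap.mem_ker.2 hTz_cycle) hTz_ne

end Main

/-- **Proposition 2.1.**  A finite graded lattice `L` of rank `n` whose proper part has
nonzero reduced homology `H̃_{n-2}` over `K` has at least `binom(n,k)` good elements of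
rank `k`, for every `0 ≤ k ≤ n`. -/
theorem good_elements_count
    (n : ℕ) (hn : 1 ≤ n)
    (α : Type*) [Lattice α] [BoundedOrder α] [Fintype α] [GradeMinOrder ℕ α]
    (hrank : grade ℕ (⊤ : α) = n)
    (K : Type*) [Field K]
    (hH : Nontrivial (ReducedHomology K (properPart α) (n - 1))) :
    ∀ k ≤ n, n.choose k ≤ Nat.card {x : α // grade ℕ x = k ∧ IsGoodElement K x} := by
  classical
  intro k hk
  have gsm : StrictMono (grade ℕ : α → ℕ) := grade_strictMono
  rcases Nat.eq_zero_or_pos k with rfl | hk1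
  · haveI : Nonempty {x : α // grade ℕ x = 0 ∧ IsGoodElement K x} :=
      ⟨⟨⊥, grade_bot, Or.inl rfl⟩⟩
    rw [Nat.choose_zero_right]
    exact Nat.card_pos
  rcases Nat.lt_or_ge k n with hk2 | hk2
  swap
  · have hkn : k = n := le_antisymm hk hk2
    subst hkn
    have hIoo : Set.Ioo (⊥:α) ⊤ = properPart α := by
      ext w
      simp [properPart, Set.mem_Ioo, bot_lt_iff_ne_bot, lt_top_iff_ne_top]
    have hgood : IsGoodElement K (⊤:α) := by
      right
      rw [hrank, hIoo]
      exact hH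
    haveI : Nonempty {x : α // grade ℕ x = k ∧ IsGoodElement K x} := ⟨⟨⊤, hrank, hgood⟩⟩
    calc k.choose k = 1 := Nat.choose_self k
      _ ≤ _ := Nat.card_pos
  -- main case 1 ≤ k ≤ n - 1
  have hn2 : 2 ≤ n := by omega
  obtain ⟨m, rfl⟩ : ∃ m, n = m + 2 := ⟨n - 2, by omega⟩
  obtain ⟨z, hzc, hznb⟩ := exists_cycle (K := K) (s := properPart α) (m+2-1) hH
  have hz' : simpBoundary K (properPart α) m z = 0 := LinearMap.mem_ker.1 hzc
  have hz0 : z ≠ 0 := fun h => hznb (h ▸ Submodule.zero_mem _)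
  -- the lifted flags of the support of z
  set lift : OrderedSimplex (properPart α) (m+1) → (ℕ → α) := fun σ i =>
    if h : 1 ≤ i ∧ i ≤ m + 1 then σ.1 ⟨i-1, by omega⟩ else if i = 0 then ⊥ else ⊤
    with hliftdef
  set F : Set (ℕ → α) := lift '' {σ | z σ ≠ 0} with hFdef
  have lift_mid : ∀ σ (i : ℕ), 1 ≤ i → i ≤ m+1 → ∀ (l : Fin (m+1)), l.val = i - 1 →
      lift σ i = σ.1 l := by
    intro σ i h1 h2 l hl
    show (if h : 1 ≤ i ∧ i ≤ m + 1 then σ.1 ⟨i-1, by omega⟩ else if i = 0 then ⊥ else ⊤) = _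
    rw [dif_pos ⟨h1, h2⟩]
    apply congrArg; apply Fin.ext; simp [hl]
  have lift_bot : ∀ σ, lift σ 0 = ⊥ := by
    intro σ
    show (if h : 1 ≤ 0 ∧ (0:ℕ) ≤ m + 1 then σ.1 ⟨0-1, by omega⟩ else
      if (0:ℕ) = 0 then ⊥ else ⊤) = ⊥
    rw [dif_neg (by omega), if_pos rfl]
  have lift_top : ∀ σ (i : ℕ), m + 2 ≤ i → lift σ i = ⊤ := by
    intro σ i hi
    show (if h : 1 ≤ i ∧ i ≤ m + 1 then σ.1 ⟨i-1, by omega⟩ else if i = 0 then ⊥ else ⊤) = ⊤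
    rw [dif_neg (by omega), if_neg (by omega)]
  have cover_of_grades : ∀ (u w : α), grade ℕ u + 1 = grade ℕ w → u < w → u ⋖ w := by
    intro u w hg hlt
    refine ⟨hlt, fun d h1 h2 => ?_⟩
    have g1 := gsm h1
    have g2 := gsm h2
    omega
  have hcov : ∀ cc ∈ F, ∀ i ≤ m + 1, cc i ⋖ cc (i+1) := by
    rintro _ ⟨σ, hσ, rfl⟩ i hi
    rcases Nat.eq_zero_or_pos i with rfl | hi1
    · have pb : (0:ℕ) < m + 1 := by omega
      rw [lift_bot, lift_mid σ 1 le_rfl (by omega) ⟨0, pb⟩ rfl]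
      apply cover_of_grades
      · rw [grade_bot, simplex_grade hrank σ ⟨0, pb⟩]
        simp
      · exact bot_lt_iff_ne_bot.2 (σ.2.2 _).1
    rcases Nat.lt_or_ge i (m+1) with hi2 | hi2
    · have pa : i - 1 < m + 1 := by omega
      have pb : i < m + 1 := hi2
      rw [lift_mid σ i hi1 (by omega) ⟨i-1, pa⟩ rfl,
          lift_mid σ (i+1) (by omega) (by omega) ⟨i, pb⟩ (by show i = i + 1 - 1; omega)]
      apply cover_of_grades
      · rw [simplex_grade hrank σ ⟨i-1, pa⟩, simplex_grade hrank σ ⟨i, pb⟩]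
        show i - 1 + 1 + 1 = i + 1
        omega
      · exact σ.2.1 (show (⟨i-1, pa⟩ : Fin (m+1)) < ⟨i, pb⟩ from by show i - 1 < i; omega)
    · have hieq : i = m + 1 := by omega
      subst hieq
      have pa : m < m + 1 := by omega
      rw [lift_mid σ (m+1) hi1 le_rfl ⟨m, pa⟩ (by show m = m + 1 - 1; omega),
        lift_top σ (m+2) le_rfl]
      apply cover_of_grades
      · rw [simplex_grade hrank σ ⟨m, pa⟩, hrank]
      · exact lt_top_iff_ne_top.2 (σ.2.2 _).2
  have hbb : ∀ cc ∈ F, cc 0 = ⊥ := by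
    rintro _ ⟨σ, hσ, rfl⟩; exact lift_bot σ
  have htt : ∀ cc ∈ F, cc (m+1+1) = ⊤ := by
    rintro _ ⟨σ, hσ, rfl⟩; exact lift_top σ (m+2) le_rfl
  have hexch : ∀ cc ∈ F, ∀ j, 1 ≤ j → j ≤ m + 1 →
      ∃ cc' ∈ F, cc' j ≠ cc j ∧ ∀ i, i ≠ j → cc' i = cc i := by
    rintro _ ⟨σ, hσ, rfl⟩ j hj1 hj2
    have hjb : j - 1 < m + 1 := by omega
    obtain ⟨σ', hσ', hne, hagree⟩ := exchange_lemma hrank z hz' σ hσ ⟨j-1, hjb⟩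
    refine ⟨lift σ', ⟨σ', hσ', rfl⟩, ?_, ?_⟩
    · rw [lift_mid σ' j hj1 hj2 ⟨j-1, hjb⟩ rfl, lift_mid σ j hj1 hj2 ⟨j-1, hjb⟩ rfl]
      exact hne
    · intro i hij
      rcases Nat.eq_zero_or_pos i with rfl | hi1
      · rw [lift_bot, lift_bot]
      rcases Nat.lt_or_ge i (m+2) with hi2 | hi2
      · have hib : i - 1 < m + 1 := by omega
        rw [lift_mid σ' i hi1 (by omega) ⟨i-1, hib⟩ rfl, lift_mid σ i hi1 (by omega) ⟨i-1, hib⟩ rfl]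
        refine hagree ⟨i-1, hib⟩ (fun hf => hij ?_)
        have hval : i - 1 = j - 1 := congrArg Fin.val hf
        show i = j
        omega
      · rw [lift_top σ' i hi2, lift_top σ i hi2]
  have hneF : F.Nonempty := by
    obtain ⟨σ, hσ⟩ := Finsupp.ne_iff.1 hz0
    refine ⟨lift σ, σ, ?_, rfl⟩
    simpa using hσ
  have hsub : {x | ∃ cc ∈ F, cc k = x} ⊆ {x | grade ℕ x = k ∧ IsGoodElement K x} := by
    rintro x ⟨_, ⟨σ, hσ, rfl⟩, rfl⟩
    have hkb : k - 1 < m + 1 := by omega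
    show grade ℕ (lift σ k) = k ∧ IsGoodElement K (lift σ k)
    rw [lift_mid σ k hk1 (by omega) ⟨k-1, hkb⟩ rfl]
    constructor
    · rw [simplex_grade hrank σ ⟨k-1, hkb⟩]
      show k - 1 + 1 = k
      omega
    · exact good_of_support hrank z hz' σ hσ ⟨k-1, hkb⟩
  refine le_trans (countLemma (m+1) (⊥:α) (⊤:α) F hneF hcov hbb htt hexch k (by omega)) ?_
  calc Set.ncard {x | ∃ cc ∈ F, cc k = x}
      ≤ Set.ncard {x | grade ℕ x = k ∧ IsGoodElement K x} :=
        Set.ncard_le_ncard hsub (Set.toFinite _)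
    _ = Nat.card {x : α // grade ℕ x = k ∧ IsGoodElement K x} := rfl
end

section
/- Let L be a finite graded lattice of rank n ≥ 1 whose proper part has nonzero (n-2)-nd reduced homology over k. Then L has at least one coatom c such that the order complex of the open interval (0̂, c) has nonzero (n-3)-rd reduced homology over k (where for n = 1 the coatom 0̂ itself counts). -/
set_option maxSynthPendingDepth 2

open Finset

variable {α : Type*}

namespace GoodCoatomAux

variable {L : Type*} [PartialOrder L] [BoundedOrder L]

lemma ioo_subset_properPart {c : L} (hc : c ∈ properPart L) :
    Set.Ioo (⊥ : L) c ⊆ properPart L := by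
  rintro x ⟨hx1, hx2⟩
  refine ⟨hx1.ne', fun hxt => ?_⟩
  subst hxt
  exact hc.2 (top_le_iff.mp hx2.le)

lemma strictMono_snoc {j : ℕ} (g : Fin j → L) (c : L) (hg : StrictMono g)
    (hlt : ∀ i, g i < c) : StrictMono (Fin.snoc g c : Fin (j + 1) → L) := by
  rw [Fin.strictMono_iff_lt_succ]
  intro i
  rw [Fin.snoc_castSucc]
  rcases Fin.eq_castSucc_or_eq_last i.succ with ⟨k, hk⟩ | hk
  · rw [hk, Fin.snoc_castSucc]
    refine hg ?_
    have h2 : Fin.castSucc i < Fin.castSucc k := hk ▸ (Fin.castSucc_lt_succ : Fin.castSucc i < i.succ)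
    exact Fin.castSucc_lt_castSucc_iff.mp h2
  · rw [hk, Fin.snoc_last]
    exact hlt i

/-- Append the top element `c` to a chain in the open interval `(⊥, c)`. -/
def append {c : L} (hc : c ∈ properPart L) {j : ℕ}
    (σ : OrderedSimplex (Set.Ioo (⊥ : L) c) j) :
    OrderedSimplex (properPart L) (j + 1) :=
  ⟨Fin.snoc σ.1 c,
   strictMono_snoc σ.1 c σ.2.1 (fun i => (σ.2.2 i).2), by
    intro k
    induction k using Fin.lastCases with
    | last => rw [Fin.snoc_last]; exact hc
    | cast k => rw [Fin.snoc_castSucc]; exact ioo_subset_properPart hc (σ.2.2 k)⟩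

lemma append_injective {c : L} (hc : c ∈ properPart L) {j : ℕ} :
    Function.Injective (append hc (j := j)) := by
  intro a b h
  apply Subtype.ext
  funext i
  have h2 := congrArg (fun t => t.1 (Fin.castSucc i)) h
  simpa only [append, Fin.snoc_castSucc] using h2

lemma append_last {c : L} (hc : c ∈ properPart L) {j : ℕ}
    (σ : OrderedSimplex (Set.Ioo (⊥ : L) c) j) :
    (append hc σ).1 (Fin.last j) = c := by
  simp [append]

lemma exists_append {c : L} (hc : c ∈ properPart L) {j : ℕ}
    (ρ : OrderedSimplex (properPart L) (j + 1)) (h : ρ.1 (Fin.last j) = c) :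
    ∃ σ, append hc σ = ρ := by
  refine ⟨⟨fun i => ρ.1 (Fin.castSucc i), ρ.2.1.comp Fin.strictMono_castSucc, fun i => ?_⟩, ?_⟩
  · exact ⟨(ρ.2.2 (Fin.castSucc i)).1.bot_lt, h ▸ ρ.2.1 (Fin.castSucc_lt_last i)⟩
  · apply Subtype.ext
    funext k
    induction k using Fin.lastCases with
    | last => exact (append_last hc _).trans h.symm
    | cast k => simp [append]

/-- Strip the last vertex `c` from chains ending at `c` (as a linear map on chains). -/
noncomputable def strip (K : Type*) [CommRing K] {c : L} (hc : c ∈ properPart L) (j : ℕ) :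
    SimpChains K (properPart L) (j + 1) →ₗ[K] SimpChains K (Set.Ioo (⊥ : L) c) j :=
  Finsupp.lcomapDomain (append hc) (append_injective hc)

lemma strip_apply (K : Type*) [CommRing K] {c : L} (hc : c ∈ properPart L) {j : ℕ}
    (z : SimpChains K (properPart L) (j + 1)) (σ : OrderedSimplex (Set.Ioo (⊥ : L) c) j) :
    strip K hc j z σ = z (append hc σ) := rfl

lemma strip_single_of_ne (K : Type*) [CommRing K] {c : L} (hc : c ∈ properPart L) {j : ℕ}
    (ρ : OrderedSimplex (properPart L) (j + 1)) (h : ρ.1 (Fin.last j) ≠ c) (a : K) :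
    strip K hc j (Finsupp.single ρ a) = 0 := by
  ext τ
  rw [strip_apply, Finsupp.coe_zero, Pi.zero_apply]
  refine Finsupp.single_eq_of_ne' fun he => ?_
  exact h (by rw [he, append_last])

lemma strip_single_append (K : Type*) [CommRing K] {c : L} (hc : c ∈ properPart L) {j : ℕ}
    (σ : OrderedSimplex (Set.Ioo (⊥ : L) c) j) (a : K) :
    strip K hc j (Finsupp.single (append hc σ) a) = Finsupp.single σ a := by
  ext τ
  rw [strip_apply]
  rcases eq_or_ne σ τ with rfl | hne
  · rw [Finsupp.single_eq_same, Finsupp.single_eq_same]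
  · rw [Finsupp.single_eq_of_ne' hne, Finsupp.single_eq_of_ne' fun he =>
      hne (append_injective hc he)]

lemma boundary_single (K : Type*) [CommRing K] (s : Set L) (j : ℕ)
    (σ : OrderedSimplex s (j + 1)) (a : K) :
    simpBoundary K s j (Finsupp.single σ a) =
      ∑ i : Fin (j + 1), ((-1 : K) ^ (i : ℕ)) • Finsupp.single (σ.face i) a := by
  rw [simpBoundary, Finsupp.lsum_single, LinearMap.sum_apply]
  refine Finset.sum_congr rfl fun i _ => ?_
  rw [LinearMap.smul_apply, Finsupp.lsingle_apply]

lemma face_append_castSucc {c : L} (hc : c ∈ properPart L) {j : ℕ}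
    (σ : OrderedSimplex (Set.Ioo (⊥ : L) c) (j + 1)) (i : Fin (j + 1)) :
    (append hc σ).face (Fin.castSucc i) = append hc (σ.face i) := by
  apply Subtype.ext
  funext k
  show (append hc σ).1 ((Fin.castSucc i).succAbove k) = (append hc (σ.face i)).1 k
  induction k using Fin.lastCases with
  | last =>
    rw [Fin.succAbove_of_le_castSucc _ _ (Fin.castSucc_le_castSucc_iff.mpr (Fin.le_last i)),
      Fin.succ_last, append_last, append_last]
  | cast k =>
    rw [Fin.castSucc_succAbove_castSucc]
    show (Fin.snoc σ.1 c : Fin (j + 2) → L) (Fin.castSucc (i.succAbove k)) =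
      (Fin.snoc (σ.face i).1 c : Fin (j + 1) → L) (Fin.castSucc k)
    rw [Fin.snoc_castSucc, Fin.snoc_castSucc]
    rfl

lemma face_last_vertex {s : Set L} {j : ℕ} (σ : OrderedSimplex s (j + 2)) {i : Fin (j + 2)}
    (h : i ≠ Fin.last (j + 1)) :
    (σ.face i).1 (Fin.last j) = σ.1 (Fin.last (j + 1)) := by
  show σ.1 (i.succAbove (Fin.last j)) = _
  rw [Fin.succAbove_ne_last_last h]

lemma face_last_vertex_last {s : Set L} {j : ℕ} (σ : OrderedSimplex s (j + 2)) :
    (σ.face (Fin.last (j + 1))).1 (Fin.last j) = σ.1 (Fin.castSucc (Fin.last j)) := by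
  show σ.1 ((Fin.last (j + 1)).succAbove (Fin.last j)) = _
  rw [Fin.succAbove_last]

/-- The key commuting square: stripping the top vertex `c` commutes with the boundary,
provided `c` is maximal in the proper part. -/
lemma square (K : Type*) [CommRing K] {c : L} (hc : c ∈ properPart L)
    (hmax : ∀ x ∈ properPart L, ¬ c < x) (j : ℕ) :
    (simpBoundary K (Set.Ioo (⊥ : L) c) j).comp (strip K hc (j + 1)) =
      (strip K hc j).comp (simpBoundary K (properPart L) (j + 1)) := by
  apply Finsupp.lhom_ext
  intro σ a
  rw [LinearMap.comp_apply, LinearMap.comp_apply, boundary_single, map_sum]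
  simp only [map_smul]
  by_cases hσ : σ.1 (Fin.last (j + 1)) = c
  · obtain ⟨σ₀, rfl⟩ := exists_append hc σ hσ
    rw [strip_single_append, boundary_single]
    conv_rhs => rw [Fin.sum_univ_castSucc]
    have h2 : strip K hc j
        (Finsupp.single ((append hc σ₀).face (Fin.last (j + 1))) a) = 0 := by
      refine strip_single_of_ne K hc _ ?_ a
      rw [face_last_vertex_last]
      show (Fin.snoc σ₀.1 c : Fin (j + 2) → L) (Fin.castSucc (Fin.last j)) ≠ c
      rw [Fin.snoc_castSucc]
      exact (σ₀.2.2 (Fin.last j)).2.ne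
    rw [h2, smul_zero, add_zero]
    refine Finset.sum_congr rfl fun i _ => ?_
    rw [face_append_castSucc, strip_single_append, Fin.coe_castSucc]
  · rw [strip_single_of_ne K hc σ hσ a, map_zero]
    refine (Finset.sum_eq_zero fun i _ => ?_).symm
    have h3 : (σ.face i).1 (Fin.last j) ≠ c := by
      by_cases hi : i = Fin.last (j + 1)
      · subst hi
        rw [face_last_vertex_last]
        intro he
        have hlt : σ.1 (Fin.castSucc (Fin.last j)) < σ.1 (Fin.last (j + 1)) :=
          σ.2.1 (Fin.castSucc_lt_last _)
        exact hmax (σ.1 (Fin.last (j + 1))) (σ.2.2 _) (he ▸ hlt)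
      · rw [face_last_vertex σ hi]; exact hσ
    rw [strip_single_of_ne K hc _ h3 a, smul_zero]

lemma strip_mem_cycles (K : Type*) [CommRing K] {c : L} (hc : c ∈ properPart L)
    (hmax : ∀ x ∈ properPart L, ¬ c < x) (j : ℕ)
    (z : SimpChains K (properPart L) (j + 1)) (hz : z ∈ simpCycles K (properPart L) (j + 1)) :
    strip K hc j z ∈ simpCycles K (Set.Ioo (⊥ : L) c) j := by
  cases j with
  | zero => exact Submodule.mem_top
  | succ k =>
    show strip K hc (k + 1) z ∈ LinearMap.ker (simpBoundary K (Set.Ioo (⊥ : L) c) k)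
    rw [LinearMap.mem_ker]
    have h2 := LinearMap.congr_fun (square K hc hmax k) z
    rw [LinearMap.comp_apply, LinearMap.comp_apply] at h2
    rw [h2]
    have hz' : simpBoundary K (properPart L) (k + 1) z = 0 := hz
    rw [hz', map_zero]

section Graded

variable [GradeMinOrder ℕ L]

lemma strictMono_fin_bound {m : ℕ} (g : Fin m → ℕ) (hg : StrictMono g) (hm : 0 < m) :
    ∀ k (hk : k < m), k + g ⟨0, hm⟩ ≤ g ⟨k, hk⟩ := by
  intro k
  induction k with
  | zero => intro hk; simp
  | succ k ih =>
    intro hk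
    have h1 := ih (Nat.lt_of_succ_lt hk)
    have h2 : g ⟨k, Nat.lt_of_succ_lt hk⟩ < g ⟨k + 1, hk⟩ := hg (by simp [Fin.mk_lt_mk])
    omega

lemma grade_last_vertex {m : ℕ} (hrank : grade ℕ (⊤ : L) = m + 2)
    (σ : OrderedSimplex (properPart L) (m + 1)) :
    grade ℕ (σ.1 (Fin.last m)) = m + 1 := by
  set g : Fin (m + 1) → ℕ := fun i => grade ℕ (σ.1 i) with hg
  have hsm : StrictMono g := (grade_strictMono (𝕆 := ℕ)).comp σ.2.1
  have h0 : 1 ≤ g ⟨0, Nat.succ_pos m⟩ := by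
    have hb : (⊥ : L) < σ.1 ⟨0, Nat.succ_pos m⟩ := (σ.2.2 _).1.bot_lt
    have := grade_strictMono (𝕆 := ℕ) hb
    rw [grade_bot] at this
    exact this
  have h1 := strictMono_fin_bound g hsm (Nat.succ_pos m) m (Nat.lt_succ_self m)
  have h2 : g ⟨m, Nat.lt_succ_self m⟩ < m + 2 := by
    have ht : σ.1 ⟨m, Nat.lt_succ_self m⟩ < ⊤ := (σ.2.2 _).2.lt_top
    have := grade_strictMono (𝕆 := ℕ) ht
    rw [hrank] at this
    exact this
  have : g (Fin.last m) = m + 1 := by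
    have : Fin.last m = ⟨m, Nat.lt_succ_self m⟩ := rfl
    rw [this]; omega
  exact this

lemma isEmpty_top_chain {c : L} {m : ℕ} (hgc : grade ℕ c = m + 1) :
    IsEmpty (OrderedSimplex (Set.Ioo (⊥ : L) c) (m + 1)) := by
  constructor
  intro σ
  set g : Fin (m + 1) → ℕ := fun i => grade ℕ (σ.1 i) with hg
  have hsm : StrictMono g := (grade_strictMono (𝕆 := ℕ)).comp σ.2.1
  have h0 : 1 ≤ g ⟨0, Nat.succ_pos m⟩ := by
    have hb : (⊥ : L) < σ.1 ⟨0, Nat.succ_pos m⟩ := (σ.2.2 _).1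
    have := grade_strictMono (𝕆 := ℕ) hb
    rw [grade_bot] at this
    exact this
  have h1 := strictMono_fin_bound g hsm (Nat.succ_pos m) m (Nat.lt_succ_self m)
  have h2 : g ⟨m, Nat.lt_succ_self m⟩ < m + 1 := by
    have ht : σ.1 ⟨m, Nat.lt_succ_self m⟩ < c := (σ.2.2 _).2
    have := grade_strictMono (𝕆 := ℕ) ht
    rw [hgc] at this
    exact this
  omega

lemma coatom_max {c : L} {m : ℕ} (hrank : grade ℕ (⊤ : L) = m + 2)
    (hgc : grade ℕ c = m + 1) : ∀ x ∈ properPart L, ¬ c < x := by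
  intro x hx hlt
  have h1 := grade_strictMono (𝕆 := ℕ) hlt
  have h2 : x < ⊤ := hx.2.lt_top
  have h3 := grade_strictMono (𝕆 := ℕ) h2
  rw [hgc] at h1
  rw [hrank] at h3
  omega

end Graded

end GoodCoatomAux


open GoodCoatomAux

/-- **Step 1.**  A finite graded lattice `L` of rank `n ≥ 1` whose proper part has
nonzero reduced homology `H̃_{n-2}` over `K` has at least one good coatom: an element
`c` of rank `n - 1` with `H̃_{n-3}(Δ(⊥,c); K) ≠ 0` (for `n = 1` the coatom `⊥` itself
counts). -/
theorem exists_good_coatom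
    (n : ℕ) (hn : 1 ≤ n)
    (α : Type*) [Lattice α] [BoundedOrder α] [Fintype α] [GradeMinOrder ℕ α]
    (hrank : grade ℕ (⊤ : α) = n)
    (K : Type*) [Field K]
    (hH : Nontrivial (ReducedHomology K (properPart α) (n - 1))) :
    ∃ c : α, grade ℕ c = n - 1 ∧
      (c = ⊥ ∨ Nontrivial (ReducedHomology K (Set.Ioo (⊥ : α) c) (n - 2))) := by
  rcases n with _ | n
  · omega
  rcases n with _ | m
  · -- rank 1: the coatom `⊥` works
    exact ⟨⊥, by simpa using (grade_bot : grade ℕ (⊥ : α) = ⊥), Or.inl rfl⟩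
  -- rank `m + 2`
  have hcyc : Nontrivial ↥(simpCycles K (properPart α) (m + 1)) := by
    by_contra h
    rw [not_nontrivial_iff_subsingleton] at h
    have hsub : Subsingleton (ReducedHomology K (properPart α) (m + 1)) := by
      unfold ReducedHomology
      haveI := h
      refine ⟨fun a b => ?_⟩
      obtain ⟨x, rfl⟩ := Submodule.Quotient.mk_surjective _ a
      obtain ⟨y, rfl⟩ := Submodule.Quotient.mk_surjective _ b
      rw [Subsingleton.elim x y]
    exact (not_nontrivial_iff_subsingleton.mpr hsub) hH
  obtain ⟨z, hzmem, hz0⟩ : ∃ z ∈ simpCycles K (properPart α) (m + 1), z ≠ 0 := by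
    obtain ⟨⟨a, ha⟩, ⟨b, hb⟩, hab⟩ := hcyc
    rcases eq_or_ne a 0 with h | h
    · exact ⟨b, hb, fun hb0 => hab (by simp [Subtype.ext_iff, h, hb0])⟩
    · exact ⟨a, ha, h⟩
  obtain ⟨σ, hσ⟩ : ∃ σ, z σ ≠ 0 := by
    by_contra h
    push_neg at h
    exact hz0 (Finsupp.ext h)
  set c : α := σ.1 (Fin.last m) with hcdef
  have hcmem : c ∈ properPart α := σ.2.2 _
  have hgc : grade ℕ c = m + 1 := grade_last_vertex hrank σ
  have hmax : ∀ x ∈ properPart α, ¬ c < x := coatom_max hrank hgc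
  refine ⟨c, hgc, Or.inr ?_⟩
  by_contra hng
  rw [not_nontrivial_iff_subsingleton] at hng
  have hng' : Subsingleton
      (↥(simpCycles K (Set.Ioo (⊥ : α) c) m) ⧸
        (simpBoundaries K (Set.Ioo (⊥ : α) c) m).comap
          (simpCycles K (Set.Ioo (⊥ : α) c) m).subtype) := hng
  have hempty : IsEmpty (OrderedSimplex (Set.Ioo (⊥ : α) c) (m + 1)) :=
    isEmpty_top_chain (c := c) (m := m) hgc
  have hbdry : simpBoundaries K (Set.Ioo (⊥ : α) c) m = ⊥ := by
    rw [eq_bot_iff]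
    rintro x ⟨w, rfl⟩
    have hw : w = 0 := Finsupp.ext fun t => (hempty.false t).elim
    rw [hw, map_zero]
    exact Submodule.zero_mem ⊥
  have hcyc0 : ∀ w ∈ simpCycles K (Set.Ioo (⊥ : α) c) m, w = 0 := by
    rw [Submodule.Quotient.subsingleton_iff, hbdry, Submodule.comap_bot,
      Submodule.ker_subtype] at hng'
    intro w hw
    have h1 : (⟨w, hw⟩ : ↥(simpCycles K (Set.Ioo (⊥ : α) c) m)) ∈
        (⊥ : Submodule K ↥(simpCycles K (Set.Ioo (⊥ : α) c) m)) := by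
      rw [hng']
      exact Submodule.mem_top
    have h2 := (Submodule.mem_bot K).mp h1
    exact congrArg Subtype.val h2
  have hzc : strip K hcmem m z ∈ simpCycles K (Set.Ioo (⊥ : α) c) m :=
    strip_mem_cycles K hcmem hmax m z hzmem
  have hz0' : strip K hcmem m z = 0 := hcyc0 _ hzc
  obtain ⟨σ₀, hσ₀⟩ := exists_append hcmem σ hcdef.symm
  apply hσ
  rw [← hσ₀, ← strip_apply K hcmem z σ₀, hz0']
  rfl
end

section
/- Let L be a finite graded lattice of rank n ≥ 2 whose proper part has nonzero (n-2)-nd reduced homology over k, and let c be a coatom of L with H̃_{n-3}(Δ(0̂,c); k) = 0. Let M = J ∪ {1̂}, where J is the order ideal of L generated by all coatoms other than c. Then M is a graded lattice of rank n and H̃_{n-2}(Δ(M \ {0̂,1̂}); k) ≅ H̃_{n-2}(Δ(L \ {0̂,1̂}); k) ≠ 0. -/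
set_option maxSynthPendingDepth 2

open Finset

variable {α : Type*}

section AuxDeletion

namespace CoatomDel

variable {K : Type*} [CommRing K]

/-! ### Inclusion of chain complexes -/

section Incl

variable [Preorder α]

def simplexIncl {s u : Set α} (h : s ⊆ u) {k : ℕ} (σ : OrderedSimplex s k) :
    OrderedSimplex u k :=
  ⟨σ.1, σ.2.1, fun i => h (σ.2.2 i)⟩

lemma simplexIncl_injective {s u : Set α} (h : s ⊆ u) {k : ℕ} :
    Function.Injective (simplexIncl (α := α) h (k := k)) := by
  intro a b hab
  exact Subtype.ext (congrArg (fun x : OrderedSimplex u k => x.1) hab)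

lemma simplexIncl_face {s u : Set α} (h : s ⊆ u) {k : ℕ}
    (σ : OrderedSimplex s (k + 1)) (i : Fin (k + 1)) :
    (simplexIncl h σ).face i = simplexIncl h (σ.face i) := rfl

noncomputable def chainIncl {s u : Set α} (h : s ⊆ u) (k : ℕ) :
    SimpChains K s k →ₗ[K] SimpChains K u k :=
  Finsupp.lmapDomain K K (simplexIncl h)

lemma chainIncl_single {s u : Set α} (h : s ⊆ u) {k : ℕ} (σ : OrderedSimplex s k) (b : K) :
    chainIncl (K := K) h k (Finsupp.single σ b) = Finsupp.single (simplexIncl h σ) b := by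
  simp [chainIncl, Finsupp.lmapDomain_apply, Finsupp.mapDomain_single]

lemma chainIncl_injective {s u : Set α} (h : s ⊆ u) (k : ℕ) :
    Function.Injective (chainIncl (K := K) h k) :=
  Finsupp.mapDomain_injective (simplexIncl_injective h)

lemma simpBoundary_single {s : Set α} {k : ℕ} (σ : OrderedSimplex s (k + 1)) (b : K) :
    simpBoundary K s k (Finsupp.single σ b) =
      ∑ i : Fin (k + 1), ((-1 : K) ^ (i : ℕ)) • Finsupp.single (σ.face i) b := by
  simp [simpBoundary, Finsupp.lsum_single, Finsupp.lsingle_apply]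

lemma chainIncl_boundary {s u : Set α} (h : s ⊆ u) (k : ℕ) (z : SimpChains K s (k + 1)) :
    simpBoundary K u k (chainIncl (K := K) h (k + 1) z) =
      chainIncl (K := K) h k (simpBoundary K s k z) := by
  have : (simpBoundary K u k) ∘ₗ (chainIncl (K := K) h (k + 1)) =
      (chainIncl (K := K) h k) ∘ₗ (simpBoundary K s k) := by
    apply Finsupp.lhom_ext
    intro σ b
    simp only [LinearMap.comp_apply, chainIncl_single, simpBoundary_single, map_sum,
      map_smul, chainIncl_single, simplexIncl_face]
  exact DFunLike.congr_fun this z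

end Incl

/-! ### Splitting off a maximal vertex -/

section Split

variable [Preorder α] {s : Set α} {t : α}

lemma snoc_strictMono {k : ℕ} {f : Fin k → α} (hf : StrictMono f)
    (hlt : ∀ i, f i < t) : StrictMono (Fin.snoc f t : Fin (k + 1) → α) := by
  intro i j hij
  induction j using Fin.lastCases with
  | last =>
    obtain ⟨i', rfl⟩ := Fin.exists_castSucc_eq.mpr (ne_of_lt hij)
    rw [Fin.snoc_castSucc, Fin.snoc_last]
    exact hlt i'
  | cast j' =>
    obtain ⟨i', rfl⟩ := Fin.exists_castSucc_eq.mpr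
      (ne_of_lt (lt_trans hij (Fin.castSucc_lt_last j')))
    rw [Fin.snoc_castSucc, Fin.snoc_castSucc]
    exact hf (Fin.castSucc_lt_castSucc_iff.mp hij)

lemma mem_eq_last (htmax : ∀ x ∈ s, ¬ t < x) {k : ℕ} (σ : OrderedSimplex s (k + 1))
    {i : Fin (k + 1)} (hi : σ.1 i = t) : i = Fin.last k := by
  by_contra h
  have hlt : i < Fin.last k := lt_of_le_of_ne (Fin.le_last i) h
  exact htmax _ (σ.2.2 (Fin.last k)) (hi ▸ σ.2.1 hlt)

/-- The simplex obtained by dropping the last vertex (assumed equal to `t`). -/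
def simplexDrop {k : ℕ} (σ : OrderedSimplex s (k + 1)) (hlast : σ.1 (Fin.last k) = t) :
    OrderedSimplex (s ∩ {x | x < t}) k :=
  ⟨σ.1 ∘ Fin.castSucc, σ.2.1.comp Fin.strictMono_castSucc,
    fun j => ⟨σ.2.2 _, hlast ▸ σ.2.1 (Fin.castSucc_lt_last j)⟩⟩

/-- The simplex viewed in `s \ {t}` when it avoids `t`. -/
def simplexAvoid {k : ℕ} (σ : OrderedSimplex s k) (h : ∀ i, σ.1 i ≠ t) :
    OrderedSimplex (s \ {t}) k :=
  ⟨σ.1, σ.2.1, fun i => ⟨σ.2.2 i, h i⟩⟩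

/-- The simplex of `s` obtained by appending the maximal vertex `t`. -/
def simplexSnoc (ht : t ∈ s) {k : ℕ} (τ : OrderedSimplex (s ∩ {x | x < t}) k) :
    OrderedSimplex s (k + 1) :=
  ⟨Fin.snoc τ.1 t, snoc_strictMono τ.2.1 (fun j => (τ.2.2 j).2),
    fun i => by
      induction i using Fin.lastCases with
      | last => rw [Fin.snoc_last]; exact ht
      | cast j => rw [Fin.snoc_castSucc]; exact (τ.2.2 j).1⟩

noncomputable def splitFun (htmax : ∀ x ∈ s, ¬ t < x) (k : ℕ)
    (σ : OrderedSimplex s (k + 1)) :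
    (OrderedSimplex (s \ {t}) (k + 1) ⊕ OrderedSimplex (s ∩ {x | x < t}) k) := by
  classical
  exact if h : ∃ i, σ.1 i = t then
    Sum.inr (simplexDrop σ ((mem_eq_last htmax σ h.choose_spec) ▸ h.choose_spec))
  else
    Sum.inl (simplexAvoid σ (fun i he => h ⟨i, he⟩))

lemma splitFun_eq_inl (htmax : ∀ x ∈ s, ¬ t < x) {k : ℕ}
    (σ : OrderedSimplex s (k + 1)) (h : ∀ i, σ.1 i ≠ t) :
    splitFun htmax k σ = Sum.inl (simplexAvoid σ h) := by
  classical
  have h' : ¬ ∃ i, σ.1 i = t := fun hh => h hh.choose hh.choose_spec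
  rw [splitFun, dif_neg h']

lemma splitFun_eq_inr (htmax : ∀ x ∈ s, ¬ t < x) {k : ℕ}
    (σ : OrderedSimplex s (k + 1)) (hlast : σ.1 (Fin.last k) = t) :
    splitFun htmax k σ = Sum.inr (simplexDrop σ hlast) := by
  classical
  have h' : ∃ i, σ.1 i = t := ⟨Fin.last k, hlast⟩
  rw [splitFun, dif_pos h']

lemma snoc_last_mem (ht : t ∈ s) {k : ℕ} (τ : OrderedSimplex (s ∩ {x | x < t}) k) :
    (simplexSnoc ht τ).1 (Fin.last k) = t := by
  show (Fin.snoc τ.1 t : Fin (k + 1) → α) (Fin.last k) = t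
  rw [Fin.snoc_last]

noncomputable def splitEquiv (ht : t ∈ s) (htmax : ∀ x ∈ s, ¬ t < x) (k : ℕ) :
    OrderedSimplex s (k + 1) ≃
      (OrderedSimplex (s \ {t}) (k + 1) ⊕ OrderedSimplex (s ∩ {x | x < t}) k) where
  toFun := splitFun htmax k
  invFun τ :=
    match τ with
    | Sum.inl τ => simplexIncl Set.diff_subset τ
    | Sum.inr τ => simplexSnoc ht τ
  left_inv σ := by
    classical
    by_cases h : ∃ i, σ.1 i = t
    · have hlast : σ.1 (Fin.last k) = t :=
        (mem_eq_last htmax σ h.choose_spec) ▸ h.choose_spec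
      rw [splitFun_eq_inr htmax σ hlast]
      apply Subtype.ext
      show (Fin.snoc (σ.1 ∘ Fin.castSucc) t : Fin (k + 1) → α) = σ.1
      funext i
      induction i using Fin.lastCases with
      | last => rw [Fin.snoc_last]; exact hlast.symm
      | cast j => rw [Fin.snoc_castSucc]; rfl
    · rw [splitFun_eq_inl htmax σ (fun i he => h ⟨i, he⟩)]
      exact Subtype.ext rfl
  right_inv τ := by
    rcases τ with τ | τ
    · show splitFun htmax k (simplexIncl Set.diff_subset τ) = Sum.inl τ
      rw [splitFun_eq_inl htmax _ (fun i hi => (τ.2.2 i).2 (Set.mem_singleton_iff.mpr hi))]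
      exact congrArg Sum.inl (Subtype.ext rfl)
    · show splitFun htmax k (simplexSnoc ht τ) = Sum.inr τ
      rw [splitFun_eq_inr htmax _ (snoc_last_mem ht τ)]
      congr 1
      apply Subtype.ext
      funext j
      show (Fin.snoc τ.1 t : Fin (k + 1) → α) (Fin.castSucc j) = τ.1 j
      rw [Fin.snoc_castSucc]

lemma splitEquiv_eq_inl (ht : t ∈ s) (htmax : ∀ x ∈ s, ¬ t < x) {k : ℕ}
    (σ : OrderedSimplex s (k + 1)) (h : ∀ i, σ.1 i ≠ t) :
    splitEquiv ht htmax k σ = Sum.inl (simplexAvoid σ h) :=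
  splitFun_eq_inl htmax σ h

lemma splitEquiv_eq_inr (ht : t ∈ s) (htmax : ∀ x ∈ s, ¬ t < x) {k : ℕ}
    (σ : OrderedSimplex s (k + 1)) (hlast : σ.1 (Fin.last k) = t) :
    splitEquiv ht htmax k σ = Sum.inr (simplexDrop σ hlast) :=
  splitFun_eq_inr htmax σ hlast

noncomputable def splitL (ht : t ∈ s) (htmax : ∀ x ∈ s, ¬ t < x) (k : ℕ) :
    SimpChains K s (k + 1) ≃ₗ[K]
      SimpChains K (s \ {t}) (k + 1) × SimpChains K (s ∩ {x | x < t}) k :=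
  (Finsupp.domLCongr (splitEquiv ht htmax k)).trans
    (Finsupp.sumFinsuppLEquivProdFinsupp K)

lemma splitL_single_inl (ht : t ∈ s) (htmax : ∀ x ∈ s, ¬ t < x) {k : ℕ}
    (σ : OrderedSimplex s (k + 1)) (h : ∀ i, σ.1 i ≠ t) (b : K) :
    splitL (K := K) ht htmax k (Finsupp.single σ b) =
      (Finsupp.single (simplexAvoid σ h) b, 0) := by
  classical
  have h' : ¬ ∃ i, σ.1 i = t := fun hh => h hh.choose hh.choose_spec
  have he : splitEquiv ht htmax k σ = Sum.inl (simplexAvoid σ h) :=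
    splitEquiv_eq_inl ht htmax σ h
  simp only [splitL, LinearEquiv.trans_apply, Finsupp.domLCongr_single, he]
  apply Prod.ext
  · ext x
    rw [Finsupp.fst_sumFinsuppLEquivProdFinsupp]
    exact Finsupp.single_apply_left Sum.inl_injective _ _ _
  · ext y
    rw [Finsupp.snd_sumFinsuppLEquivProdFinsupp]
    simp [Finsupp.single_apply]

lemma splitL_single_inr (ht : t ∈ s) (htmax : ∀ x ∈ s, ¬ t < x) {k : ℕ}
    (σ : OrderedSimplex s (k + 1)) (hlast : σ.1 (Fin.last k) = t) (b : K) :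
    splitL (K := K) ht htmax k (Finsupp.single σ b) =
      (0, Finsupp.single (simplexDrop σ hlast) b) := by
  classical
  have h' : ∃ i, σ.1 i = t := ⟨Fin.last k, hlast⟩
  have he : splitEquiv ht htmax k σ = Sum.inr (simplexDrop σ hlast) :=
    splitEquiv_eq_inr ht htmax σ hlast
  simp only [splitL, LinearEquiv.trans_apply, Finsupp.domLCongr_single, he]
  apply Prod.ext
  · ext x
    rw [Finsupp.fst_sumFinsuppLEquivProdFinsupp]
    simp [Finsupp.single_apply]
  · ext y
    rw [Finsupp.snd_sumFinsuppLEquivProdFinsupp]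
    exact Finsupp.single_apply_left Sum.inr_injective _ _ _

lemma splitL_chainIncl (ht : t ∈ s) (htmax : ∀ x ∈ s, ¬ t < x) {k : ℕ}
    (a : SimpChains K (s \ {t}) (k + 1)) :
    splitL (K := K) ht htmax k (chainIncl Set.diff_subset (k + 1) a) = (a, 0) := by
  induction a using Finsupp.induction_linear with
  | zero => simp; rfl
  | add f g hf hg =>
    rw [map_add, map_add, hf, hg]
    simp
  | single σ b =>
    rw [chainIncl_single]
    have hfree : ∀ i, (simplexIncl (Set.diff_subset) σ : OrderedSimplex s (k+1)).1 i ≠ t :=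
      fun i => (σ.2.2 i).2
    rw [splitL_single_inl ht htmax _ hfree]
    have : simplexAvoid (simplexIncl Set.diff_subset σ) hfree = σ := Subtype.ext rfl
    rw [this]

end Split

end CoatomDel

end AuxDeletion
section Split2

variable {K : Type*} [CommRing K] [Preorder α] {s : Set α} {t : α}

namespace CoatomDel

noncomputable def piB (ht : t ∈ s) (htmax : ∀ x ∈ s, ¬ t < x) (k : ℕ) :
    SimpChains K s (k + 1) →ₗ[K] SimpChains K (s ∩ {x | x < t}) k :=
  (LinearMap.snd K _ _) ∘ₗ (splitL (K := K) ht htmax k).toLinearMap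

lemma piB_apply (ht : t ∈ s) (htmax : ∀ x ∈ s, ¬ t < x) (k : ℕ) (z : SimpChains K s (k + 1)) :
    piB (K := K) ht htmax k z = (splitL (K := K) ht htmax k z).2 := rfl

lemma piB_single_free (ht : t ∈ s) (htmax : ∀ x ∈ s, ¬ t < x) {k : ℕ}
    (σ : OrderedSimplex s (k + 1)) (h : ∀ i, σ.1 i ≠ t) (b : K) :
    piB (K := K) ht htmax k (Finsupp.single σ b) = 0 := by
  rw [piB_apply, splitL_single_inl ht htmax σ h]

lemma piB_single_last (ht : t ∈ s) (htmax : ∀ x ∈ s, ¬ t < x) {k : ℕ}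
    (σ : OrderedSimplex s (k + 1)) (hlast : σ.1 (Fin.last k) = t) (b : K) :
    piB (K := K) ht htmax k (Finsupp.single σ b) =
      Finsupp.single (simplexDrop σ hlast) b := by
  rw [piB_apply, splitL_single_inr ht htmax σ hlast]

lemma face_last_of {k : ℕ} (σ : OrderedSimplex s (k + 2))
    (hlast : σ.1 (Fin.last (k + 1)) = t) (i' : Fin (k + 1)) :
    (σ.face (Fin.castSucc i')).1 (Fin.last k) = t := by
  show σ.1 ((Fin.castSucc i').succAbove (Fin.last k)) = t
  rw [Fin.succAbove_castSucc_of_le _ _ (Fin.le_last i'), Fin.succ_last]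
  exact hlast

lemma drop_face {k : ℕ} (σ : OrderedSimplex s (k + 2))
    (hlast : σ.1 (Fin.last (k + 1)) = t) (i' : Fin (k + 1)) :
    simplexDrop (σ.face (Fin.castSucc i')) (face_last_of σ hlast i') =
      (simplexDrop σ hlast).face i' := by
  apply Subtype.ext
  funext j
  show σ.1 ((Fin.castSucc i').succAbove (Fin.castSucc j)) = σ.1 (Fin.castSucc (i'.succAbove j))
  rw [Fin.castSucc_succAbove_castSucc]

lemma face_last_free (htmax : ∀ x ∈ s, ¬ t < x) {k : ℕ} (σ : OrderedSimplex s (k + 2))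
    (j : Fin (k + 1)) : (σ.face (Fin.last (k + 1))).1 j ≠ t := by
  intro he
  have he' : σ.1 (Fin.castSucc j) = t := by
    have : σ.1 ((Fin.last (k + 1)).succAbove j) = t := he
    rwa [Fin.succAbove_last] at this
  have := mem_eq_last htmax σ he'
  exact (ne_of_lt (Fin.castSucc_lt_last j)) this

lemma piB_comm (ht : t ∈ s) (htmax : ∀ x ∈ s, ¬ t < x) (k : ℕ)
    (z : SimpChains K s (k + 2)) :
    piB (K := K) ht htmax k (simpBoundary K s (k + 1) z) =
      simpBoundary K (s ∩ {x | x < t}) k (piB (K := K) ht htmax (k + 1) z) := by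
  have : (piB (K := K) ht htmax k) ∘ₗ (simpBoundary K s (k + 1)) =
      (simpBoundary K (s ∩ {x | x < t}) k) ∘ₗ (piB (K := K) ht htmax (k + 1)) := by
    apply Finsupp.lhom_ext
    intro σ b
    simp only [LinearMap.comp_apply]
    by_cases h : ∃ i, σ.1 i = t
    · have hlast : σ.1 (Fin.last (k + 1)) = t :=
        (mem_eq_last htmax σ h.choose_spec) ▸ h.choose_spec
      rw [piB_single_last ht htmax σ hlast, simpBoundary_single, simpBoundary_single, map_sum]
      simp only [map_smul]
      rw [Fin.sum_univ_castSucc, piB_single_free ht htmax _ (face_last_free htmax σ),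
        smul_zero, add_zero]
      apply Finset.sum_congr rfl
      intro i' _
      rw [piB_single_last ht htmax _ (face_last_of σ hlast i'), drop_face, Fin.coe_castSucc]
    · have hfree : ∀ i, σ.1 i ≠ t := fun i he => h ⟨i, he⟩
      rw [piB_single_free ht htmax σ hfree, map_zero, simpBoundary_single, map_sum]
      simp only [map_smul]
      apply Finset.sum_eq_zero
      intro i _
      rw [piB_single_free ht htmax (σ.face i) (fun j => hfree _), smul_zero]
  exact DFunLike.congr_fun this z

/-! ### The deletion theorem -/

theorem deletion (ht : t ∈ s) (htmax : ∀ x ∈ s, ¬ t < x) (m : ℕ)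
    (hKer : ∀ z ∈ simpCycles K (s ∩ {x | x < t}) m,
      z = (0 : SimpChains K (s ∩ {x | x < t}) m))
    (hC : IsEmpty (OrderedSimplex (s ∩ {x | x < t}) (m + 1))) :
    Nonempty (ReducedHomology K (s \ {t}) (m + 1) ≃ₗ[K] ReducedHomology K s (m + 1)) := by
  classical
  have hAs : (s \ {t} : Set α) ⊆ s := Set.diff_subset
  have hcyc : ∀ x ∈ simpCycles K (s \ {t}) (m + 1),
      chainIncl (K := K) hAs (m + 1) x ∈ simpCycles K s (m + 1) := by
    intro x hx
    have hx' : simpBoundary K (s \ {t}) m x = 0 := hx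
    show chainIncl (K := K) hAs (m + 1) x ∈ LinearMap.ker (simpBoundary K s m)
    rw [LinearMap.mem_ker, chainIncl_boundary, hx', map_zero]
  let f : simpCycles K (s \ {t}) (m + 1) →ₗ[K] simpCycles K s (m + 1) :=
    (chainIncl (K := K) hAs (m + 1)).restrict hcyc
  have hbmap : (simpBoundaries K (s \ {t}) (m + 1)).comap
        (simpCycles K (s \ {t}) (m + 1)).subtype ≤
      (((simpBoundaries K s (m + 1)).comap (simpCycles K s (m + 1)).subtype)).comap f := by
    intro x hx
    rw [Submodule.mem_comap, simpBoundaries, LinearMap.mem_range] at hx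
    obtain ⟨v, hv⟩ := hx
    rw [Submodule.mem_comap, Submodule.mem_comap, simpBoundaries, LinearMap.mem_range]
    refine ⟨chainIncl (K := K) hAs (m + 2) v, ?_⟩
    show simpBoundary K s (m + 1) _ = chainIncl (K := K) hAs (m + 1) x.1
    rw [chainIncl_boundary, hv]
    rfl
  let φ := Submodule.mapQ _ _ f hbmap
  have hsurj : Function.Surjective φ := by
    intro y
    obtain ⟨z, rfl⟩ := Submodule.Quotient.mk_surjective _ y
    have hz : simpBoundary K s m z.1 = 0 := z.2
    have hb : (splitL (K := K) ht htmax m z.1).2 = 0 := by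
      cases m with
      | zero => exact hKer _ Submodule.mem_top
      | succ m' =>
        apply hKer
        show (splitL (K := K) ht htmax (m' + 1) z.1).2 ∈
          LinearMap.ker (simpBoundary K (s ∩ {x | x < t}) m')
        rw [LinearMap.mem_ker, ← piB_apply, ← piB_comm ht htmax m' z.1, hz, map_zero]
    have hza : z.1 = chainIncl (K := K) hAs (m + 1) ((splitL (K := K) ht htmax m z.1).1) := by
      apply (splitL (K := K) ht htmax m).injective
      rw [splitL_chainIncl]
      exact Prod.ext rfl hb
    have haZ : (splitL (K := K) ht htmax m z.1).1 ∈ simpCycles K (s \ {t}) (m + 1) := by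
      show _ ∈ LinearMap.ker (simpBoundary K (s \ {t}) m)
      rw [LinearMap.mem_ker]
      apply chainIncl_injective hAs m
      rw [← chainIncl_boundary, ← hza, hz, map_zero]
    refine ⟨Submodule.Quotient.mk ⟨_, haZ⟩, ?_⟩
    rw [Submodule.mapQ_apply]
    congr 1
    exact Subtype.ext hza.symm
  have hinj : Function.Injective φ := by
    rw [← LinearMap.ker_eq_bot, eq_bot_iff]
    intro x hx
    obtain ⟨⟨a, haZ⟩, rfl⟩ := Submodule.Quotient.mk_surjective _ x
    rw [LinearMap.mem_ker, Submodule.mapQ_apply, Submodule.Quotient.mk_eq_zero,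
      Submodule.mem_comap, simpBoundaries, LinearMap.mem_range] at hx
    obtain ⟨u, hu⟩ := hx
    have hu2 : (splitL (K := K) ht htmax (m + 1) u).2 = 0 :=
      Finsupp.ext fun σ => (hC.false σ).elim
    have hu' : u = chainIncl (K := K) hAs (m + 2) ((splitL (K := K) ht htmax (m + 1) u).1) := by
      apply (splitL (K := K) ht htmax (m + 1)).injective
      rw [splitL_chainIncl]
      exact Prod.ext rfl hu2
    have hkey : chainIncl (K := K) hAs (m + 1) a = chainIncl (K := K) hAs (m + 1)
        (simpBoundary K (s \ {t}) (m + 1) ((splitL (K := K) ht htmax (m + 1) u).1)) := by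
      rw [← chainIncl_boundary, ← hu']
      exact hu.symm
    have ha := chainIncl_injective hAs (m + 1) hkey
    rw [Submodule.mem_bot, Submodule.Quotient.mk_eq_zero, Submodule.mem_comap,
      simpBoundaries, LinearMap.mem_range]
    exact ⟨_, ha.symm⟩
  exact ⟨LinearEquiv.ofBijective φ ⟨hinj, hsurj⟩⟩

end CoatomDel

end Split2
section MainAux

namespace CoatomDel

lemma orderedSimplex_isEmpty [Preorder α] [GradeMinOrder ℕ α] {s : Set α} {r k : ℕ}
    (hs : ∀ x ∈ s, 1 ≤ grade ℕ x ∧ grade ℕ x ≤ r) (hrk : r < k) :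
    IsEmpty (OrderedSimplex s k) := by
  constructor
  rintro ⟨f, hmono, hmem⟩
  have key : ∀ (j : ℕ) (hj : j < k), j + 1 ≤ grade ℕ (f ⟨j, hj⟩) := by
    intro j
    induction j with
    | zero => intro hj; exact (hs _ (hmem _)).1
    | succ j ih =>
      intro hj
      have hj' : j < k := Nat.lt_of_succ_lt hj
      have h1 := ih hj'
      have h2 : grade ℕ (f ⟨j, hj'⟩) < grade ℕ (f ⟨j + 1, hj⟩) :=
        grade_strictMono (hmono (show (⟨j, hj'⟩ : Fin k) < ⟨j + 1, hj⟩ by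
          simp [Fin.lt_def]))
      omega
  have hk : k - 1 < k := by omega
  have h1 := key (k - 1) hk
  have h2 := (hs _ (hmem ⟨k - 1, hk⟩)).2
  omega

noncomputable def rhCast {K : Type*} [CommRing K] [Preorder α] {s u : Set α} (h : s = u)
    (j : ℕ) : ReducedHomology K s j ≃ₗ[K] ReducedHomology K u j := by
  subst h; exact LinearEquiv.refl K _

end CoatomDel

end MainAux
/-- Deleting a bad coatom `c`: with `M = J ∪ {⊤}`, where `J` is the order ideal
generated by the coatoms other than `c`, the subposet `M` is a graded lattice of rank
`n` (every pair has a meet and a join in `M`, and every maximal chain of `M` has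
`n + 1` elements) and `H̃_{n-2}(Δ(M∖{⊥,⊤}); K) ≅ H̃_{n-2}(Δ(L∖{⊥,⊤}); K) ≠ 0`. -/
theorem coatom_deletion
    (n : ℕ) (hn : 2 ≤ n)
    (α : Type*) [Lattice α] [BoundedOrder α] [Fintype α] [GradeMinOrder ℕ α]
    (hrank : grade ℕ (⊤ : α) = n)
    (K : Type*) [Field K]
    (hH : Nontrivial (ReducedHomology K (properPart α) (n - 1)))
    (c : α) (hc : grade ℕ c = n - 1)
    (hcbad : Subsingleton (ReducedHomology K (Set.Ioo (⊥ : α) c) (n - 2)))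
    (M : Set α)
    (hM : M = {x | ∃ d, grade ℕ d = n - 1 ∧ d ≠ c ∧ x ≤ d} ∪ {⊤}) :
    (∀ x ∈ M, ∀ y ∈ M,
        (∃ z, IsGreatest {w ∈ M | w ≤ x ∧ w ≤ y} z) ∧
        (∃ z, IsLeast {w ∈ M | x ≤ w ∧ y ≤ w} z)) ∧
    (∀ C : Finset α, ↑C ⊆ M → IsChain (· ≤ ·) (C : Set α) →
        (∀ C' : Finset α, ↑C' ⊆ M → IsChain (· ≤ ·) (C' : Set α) → C ⊆ C' → C' = C) →
        C.card = n + 1) ∧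
    Nonempty (ReducedHomology K (M \ {⊥, ⊤} : Set α) (n - 1) ≃ₗ[K]
        ReducedHomology K (properPart α) (n - 1)) ∧
    Nontrivial (ReducedHomology K (M \ {⊥, ⊤} : Set α) (n - 1)) := by
  classical
  open CoatomDel in
  -- basic grade facts
  have hgbot : grade ℕ (⊥ : α) = 0 := by
    have h := (isMin_bot : IsMin (⊥ : α)).grade ℕ
    rw [isMin_iff_eq_bot] at h
    exact h
  have hglt : ∀ {x y : α}, x < y → grade ℕ x < grade ℕ y := fun h => grade_strictMono h
  have hgle : ∀ {x y : α}, x ≤ y → grade ℕ x ≤ grade ℕ y := fun h => grade_strictMono.monotone h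
  have hpos : ∀ {x : α}, x ≠ ⊥ → 1 ≤ grade ℕ x := by
    intro x hx
    have h1 : (⊥ : α) < x := bot_lt_iff_ne_bot.mpr hx
    have h2 := hglt h1
    omega
  have hlttop : ∀ {x : α}, x ≠ ⊤ → grade ℕ x < n := by
    intro x hx
    have := hglt (lt_top_iff_ne_top.mpr hx)
    rwa [hrank] at this
  have hcne_top : c ≠ ⊤ := by intro h; rw [h, hrank] at hc; omega
  have hcne_bot : c ≠ ⊥ := by intro h; rw [h, hgbot] at hc; omega
  have heqgrade : ∀ {x y : α}, x ≤ y → grade ℕ x = grade ℕ y → x = y := by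
    intro x y hxy hg
    rcases eq_or_lt_of_le hxy with rfl | hlt
    · rfl
    · have := hglt hlt; omega
  -- the bad set `T` and the filtration `S`
  set T : Set α := {x | x ∈ properPart α ∧ ∀ d, grade ℕ d = n - 1 → d ≠ c → ¬ x ≤ d} with hT
  set S : ℕ → Set α := fun g => (properPart α \ T) ∪ {x | x ∈ T ∧ grade ℕ x < g} with hS
  have hTprop : T ⊆ properPart α := fun x hx => hx.1
  have hSprop : ∀ g, S g ⊆ properPart α := by
    intro g x hx
    rcases hx with hx | hx
    · exact hx.1
    · exact hx.1.1
  have hTup : ∀ x ∈ T, ∀ y, x ≤ y → y ∈ properPart α → y ∈ T := by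
    intro x hx y hxy hy
    exact ⟨hy, fun d hd1 hd2 hyd => hx.2 d hd1 hd2 (hxy.trans hyd)⟩
  have hcT : c ∈ T := by
    refine ⟨⟨hcne_bot, hcne_top⟩, ?_⟩
    intro d hd1 hd2 hcd
    exact hd2 (heqgrade hcd (by rw [hc, hd1])).symm
  have hgradeT : ∀ x ∈ T, grade ℕ x = n - 1 → x = c := by
    intro x hx hg
    by_contra hne
    exact hx.2 x hg hne le_rfl
  have hS0 : (M \ {⊥, ⊤} : Set α) = S 0 := by
    ext x
    constructor
    · rintro ⟨hxM, hx2⟩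
      have hxb : x ≠ ⊥ := fun h => hx2 (by rw [h]; exact Set.mem_insert _ _)
      have hxt : x ≠ ⊤ := fun h => hx2 (by rw [h]; exact Set.mem_insert_of_mem _ rfl)
      rw [hM] at hxM
      rcases hxM with ⟨d, hd1, hd2, hxd⟩ | hxtop
      · exact Or.inl ⟨⟨hxb, hxt⟩, fun hxT => hxT.2 d hd1 hd2 hxd⟩
      · exact absurd hxtop hxt
    · rintro (⟨hxp, hxT⟩ | ⟨_, hlt⟩)
      · have hex : ¬ ∀ d, grade ℕ d = n - 1 → d ≠ c → ¬ x ≤ d := fun h => hxT ⟨hxp, h⟩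
        push_neg at hex
        obtain ⟨d, hd1, hd2, hd3⟩ := hex
        refine ⟨by rw [hM]; exact Or.inl ⟨d, hd1, hd2, hd3⟩, ?_⟩
        rintro (rfl | rfl)
        · exact hxp.1 rfl
        · exact hxp.2 rfl
      · omega
  have hSn : S n = properPart α := by
    ext x
    constructor
    · intro hx; exact hSprop n hx
    · intro hx
      by_cases hxT : x ∈ T
      · exact Or.inr ⟨hxT, hlttop hx.2⟩
      · exact Or.inl ⟨hx, hxT⟩
  -- the open interval below `c`
  have hIoo : ∀ s' : Set α, s' ⊆ properPart α → (∀ x ∈ Set.Ioo (⊥ : α) c, x ∈ s') →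
      s' ∩ {x | x < c} = Set.Ioo (⊥ : α) c := by
    intro s' hsub hsup
    ext x
    constructor
    · rintro ⟨hx1, (hx2 : x < c)⟩
      exact ⟨bot_lt_iff_ne_bot.mpr (hsub hx1).1, hx2⟩
    · rintro ⟨h1, h2⟩
      exact ⟨hsup x ⟨h1, h2⟩, h2⟩
  have hidx : n - 2 + 1 = n - 1 := by omega
  have hDc1 : IsEmpty (OrderedSimplex (Set.Ioo (⊥ : α) c) (n - 2 + 1)) := by
    rw [hidx]
    apply orderedSimplex_isEmpty (r := n - 2)
    · intro x hx
      refine ⟨hpos (ne_of_gt hx.1), ?_⟩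
      have := hglt hx.2
      omega
    · omega
  have hKerc : ∀ z ∈ simpCycles K (Set.Ioo (⊥ : α) c) (n - 2), z = 0 := by
    intro z hz
    have h0 : (Submodule.Quotient.mk ⟨z, hz⟩ : ReducedHomology K (Set.Ioo (⊥ : α) c) (n - 2))
        = 0 := @Subsingleton.elim _ hcbad _ _
    rw [Submodule.Quotient.mk_eq_zero, Submodule.mem_comap, simpBoundaries,
      LinearMap.mem_range] at h0
    obtain ⟨u, hu⟩ := h0
    have hu0 : u = 0 := Finsupp.ext fun σ => (hDc1.false σ).elim
    have : z = simpBoundary K (Set.Ioo (⊥ : α) c) (n - 2) u := hu.symm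
    rw [this, hu0, map_zero]
  -- one step of the filtration
  have hstep : ∀ g, g < n → Nonempty (ReducedHomology K (S g) (n - 1) ≃ₗ[K]
      ReducedHomology K (S (g + 1)) (n - 1)) := by
    intro g hg
    have hbatch : S g ∪ {x | x ∈ T ∧ grade ℕ x = g} = S (g + 1) := by
      ext x
      constructor
      · rintro ((hx | hx) | hx)
        · exact Or.inl hx
        · exact Or.inr ⟨hx.1, by have := hx.2; omega⟩
        · exact Or.inr ⟨hx.1, by have := hx.2; omega⟩
      · rintro (hx | hx)
        · exact Or.inl (Or.inl hx)
        · by_cases he : grade ℕ x < g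
          · exact Or.inl (Or.inr ⟨hx.1, he⟩)
          · exact Or.inr ⟨hx.1, by have := hx.2; omega⟩
    have key : ∀ E : Finset α, ↑E ⊆ {x | x ∈ T ∧ grade ℕ x = g} →
        Nonempty (ReducedHomology K (S g) (n - 1) ≃ₗ[K]
          ReducedHomology K (S g ∪ ↑E) (n - 1)) := by
      intro E
      induction E using Finset.induction_on with
      | empty =>
        intro _
        exact ⟨rhCast (by simp) (n - 1)⟩
      | @insert t' E ht'E ih =>
        intro hsub
        have ht'batch : t' ∈ T ∧ grade ℕ t' = g := hsub (Finset.mem_insert_self t' E)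
        have hEsub : ↑E ⊆ {x | x ∈ T ∧ grade ℕ x = g} := fun x hx =>
          hsub (by rw [Finset.coe_insert]; exact Set.mem_insert_of_mem _ hx)
        obtain ⟨e1⟩ := ih hEsub
        have hs'sub : (S g ∪ ↑(insert t' E) : Set α) ⊆ properPart α := by
          intro x hx
          rcases hx with hx | hx
          · exact hSprop g hx
          · rw [Finset.coe_insert] at hx
            rcases hx with rfl | hx
            · exact hTprop ht'batch.1
            · exact hTprop (hEsub hx).1
        have hts' : t' ∈ (S g ∪ ↑(insert t' E) : Set α) :=
          Or.inr (by rw [Finset.coe_insert]; exact Set.mem_insert _ _)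
        have htmax' : ∀ x ∈ (S g ∪ ↑(insert t' E) : Set α), ¬ t' < x := by
          intro x hx hlt
          have hxT : x ∈ T := hTup t' ht'batch.1 x hlt.le (hs'sub hx)
          have hgx : g < grade ℕ x := by
            have := hglt hlt
            omega
          rcases hx with hx | hx
          · rcases hx with hx | hx
            · exact hx.2 hxT
            · have := hx.2; omega
          · rw [Finset.coe_insert] at hx
            rcases hx with rfl | hx
            · exact lt_irrefl _ hlt
            · have := (hEsub hx).2; omega
        have hdiff : (S g ∪ ↑(insert t' E) : Set α) \ {t'} = S g ∪ ↑E := by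
          ext x
          constructor
          · rintro ⟨hx, hxt⟩
            have hxt' : x ≠ t' := hxt
            rcases hx with hx | hx
            · exact Or.inl hx
            · rw [Finset.coe_insert] at hx
              rcases hx with rfl | hx
              · exact absurd rfl hxt'
              · exact Or.inr hx
          · intro hx
            have hxs' : x ∈ (S g ∪ ↑(insert t' E) : Set α) := by
              rcases hx with hx | hx
              · exact Or.inl hx
              · exact Or.inr (by rw [Finset.coe_insert]; exact Set.mem_insert_of_mem _ hx)
            refine ⟨hxs', ?_⟩
            intro hxx
            have hxeq : x = t' := hxx
            subst hxeq
            rcases hx with hx | hx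
            · rcases hx with hx | hx
              · exact hx.2 ht'batch.1
              · have h1 := hx.2
                have h2 := ht'batch.2
                omega
            · exact ht'E hx
        have hdel : Nonempty (ReducedHomology K
            ((S g ∪ ↑(insert t' E) : Set α) \ {t'}) (n - 2 + 1) ≃ₗ[K]
            ReducedHomology K (S g ∪ ↑(insert t' E) : Set α) (n - 2 + 1)) := by
          by_cases hgtop : g = n - 1
          · have ht'c : t' = c := hgradeT t' ht'batch.1 (by omega)
            subst ht'c
            have hDeq : (S g ∪ ↑(insert t' E) : Set α) ∩ {x | x < t'} =
                Set.Ioo (⊥ : α) t' := by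
              apply hIoo _ hs'sub
              intro x hx
              have hxp : x ∈ properPart α := by
                refine ⟨ne_of_gt hx.1, ?_⟩
                intro h
                rw [h] at hx
                exact hcne_top (top_le_iff.mp hx.2.le)
              by_cases hxT : x ∈ T
              · refine Or.inl (Or.inr ⟨hxT, ?_⟩)
                have := hglt hx.2
                omega
              · exact Or.inl (Or.inl ⟨hxp, hxT⟩)
            refine deletion hts' htmax' (n - 2) ?_ ?_
            · rw [hDeq]; exact hKerc
            · rw [hDeq]; exact hDc1
          · have hg1 : 1 ≤ g := by
              have := hpos (hTprop ht'batch.1).1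
              have := ht'batch.2
              omega
            have hDsmall : ∀ x ∈ (S g ∪ ↑(insert t' E) : Set α) ∩ {x | x < t'},
                1 ≤ grade ℕ x ∧ grade ℕ x ≤ g - 1 := by
              rintro x ⟨hx1, (hx2 : x < t')⟩
              refine ⟨hpos (hs'sub hx1).1, ?_⟩
              have h1 := hglt hx2
              have h2 := ht'batch.2
              omega
            refine deletion hts' htmax' (n - 2) ?_ ?_
            · have hE2 : IsEmpty (OrderedSimplex
                  ((S g ∪ ↑(insert t' E) : Set α) ∩ {x | x < t'}) (n - 2)) :=
                orderedSimplex_isEmpty hDsmall (by omega)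
              intro z hz
              exact Finsupp.ext fun σ => (hE2.false σ).elim
            · exact orderedSimplex_isEmpty hDsmall (by omega)
        obtain ⟨e2⟩ := hdel
        have e2' : ReducedHomology K (S g ∪ ↑E : Set α) (n - 1) ≃ₗ[K]
            ReducedHomology K (S g ∪ ↑(insert t' E) : Set α) (n - 1) := by
          rw [← hidx]
          exact (rhCast hdiff.symm _).trans e2
        exact ⟨e1.trans e2'⟩
    obtain ⟨e⟩ := key (Set.toFinite {x | x ∈ T ∧ grade ℕ x = g}).toFinset
      (by rw [Set.Finite.coe_toFinset])
    exact ⟨e.trans (rhCast (by rw [Set.Finite.coe_toFinset]; exact hbatch) (n - 1))⟩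
  -- iterate the filtration
  have iter : ∀ k : ℕ, k ≤ n → Nonempty (ReducedHomology K (S (n - k)) (n - 1) ≃ₗ[K]
      ReducedHomology K (S n) (n - 1)) := by
    intro k
    induction k with
    | zero =>
      intro _
      exact ⟨rhCast (congrArg S (by omega)) (n - 1)⟩
    | succ k ih =>
      intro hk
      obtain ⟨e1⟩ := hstep (n - (k + 1)) (by omega)
      obtain ⟨e2⟩ := ih (by omega)
      have harith : n - (k + 1) + 1 = n - k := by omega
      exact ⟨e1.trans ((rhCast (congrArg S harith) (n - 1)).trans e2)⟩
  obtain ⟨efin⟩ := iter n le_rfl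
  have emain : ReducedHomology K (M \ {⊥, ⊤} : Set α) (n - 1) ≃ₗ[K]
      ReducedHomology K (properPart α) (n - 1) :=
    (rhCast hS0 (n - 1)).trans
      (((rhCast (congrArg S (show (0 : ℕ) = n - n by omega)) (n - 1)).trans efin).trans
        (rhCast hSn (n - 1)))
  have hnontriv : Nontrivial (ReducedHomology K (M \ {⊥, ⊤} : Set α) (n - 1)) :=
    emain.toEquiv.nontrivial
  -- existence of a coatom other than `c`
  have hd : ∃ d : α, grade ℕ d = n - 1 ∧ d ≠ c := by
    by_contra hnd
    push_neg at hnd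
    have hempty : (M \ {⊥, ⊤} : Set α) = ∅ := by
      ext x
      simp only [Set.mem_empty_iff_false, iff_false]
      rintro ⟨hxM, hx2⟩
      rw [hM] at hxM
      rcases hxM with ⟨d, hd1, hd2, _⟩ | hxtop
      · exact hd2 (hnd d hd1)
      · exact hx2 (Or.inr hxtop)
    have hOS : IsEmpty (OrderedSimplex (M \ {⊥, ⊤} : Set α) (n - 1)) := by
      constructor
      rintro ⟨f, _, hmem⟩
      have := hmem ⟨0, by omega⟩
      rw [hempty] at this
      exact this
    have hsub : Subsingleton (ReducedHomology K (M \ {⊥, ⊤} : Set α) (n - 1)) := by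
      constructor
      intro a b
      obtain ⟨x, rfl⟩ := Submodule.Quotient.mk_surjective _ a
      obtain ⟨y, rfl⟩ := Submodule.Quotient.mk_surjective _ b
      have hxy : x = y := Subtype.ext (Finsupp.ext fun σ => (hOS.false σ).elim)
      rw [hxy]
    rcases hnontriv with ⟨a, b, hab⟩
    exact hab (@Subsingleton.elim _ hsub a b)
  obtain ⟨d0, hd01, hd02⟩ := hd
  have hbotM : (⊥ : α) ∈ M := by rw [hM]; exact Or.inl ⟨d0, hd01, hd02, bot_le⟩
  have htopM : (⊤ : α) ∈ M := by rw [hM]; exact Or.inr rfl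
  refine ⟨?_, ?_, ⟨emain⟩, hnontriv⟩
  · -- meets and joins
    intro x hx y hy
    have hx' : (∃ d, grade ℕ d = n - 1 ∧ d ≠ c ∧ x ≤ d) ∨ x = ⊤ := by rw [hM] at hx; exact hx
    have hy' : (∃ d, grade ℕ d = n - 1 ∧ d ≠ c ∧ y ≤ d) ∨ y = ⊤ := by rw [hM] at hy; exact hy
    constructor
    · rcases hx' with hxJ | rfl
      · rcases hy' with hyJ | rfl
        · obtain ⟨d, hd1, hd2, hxd⟩ := hxJ
          refine ⟨x ⊓ y, ⟨?_, inf_le_left, inf_le_right⟩, ?_⟩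
          · rw [hM]; exact Or.inl ⟨d, hd1, hd2, inf_le_left.trans hxd⟩
          · rintro w ⟨_, hw1, hw2⟩
            exact le_inf hw1 hw2
        · exact ⟨x, ⟨hx, le_rfl, le_top⟩, fun w hw => hw.2.1⟩
      · exact ⟨y, ⟨hy, le_top, le_rfl⟩, fun w hw => hw.2.2⟩
    · by_cases hxy : x ⊔ y ∈ M
      · exact ⟨x ⊔ y, ⟨hxy, le_sup_left, le_sup_right⟩, fun w hw => sup_le hw.2.1 hw.2.2⟩
      · refine ⟨⊤, ⟨htopM, le_top, le_top⟩, ?_⟩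
        rintro w ⟨hwM, hw1, hw2⟩
        have hw' : (∃ d, grade ℕ d = n - 1 ∧ d ≠ c ∧ w ≤ d) ∨ w = ⊤ := by
          rw [hM] at hwM; exact hwM
        rcases hw' with ⟨d, hd1, hd2, hwd⟩ | rfl
        · refine absurd (?_ : x ⊔ y ∈ M) hxy
          rw [hM]
          exact Or.inl ⟨d, hd1, hd2, (sup_le hw1 hw2).trans hwd⟩
        · exact le_rfl
  · -- every maximal chain has n + 1 elements
    intro C hCM hchain hmax
    have hbotC : (⊥ : α) ∈ C := by
      have h' := hmax (insert ⊥ C)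
        (by rw [Finset.coe_insert]; exact Set.insert_subset_iff.mpr ⟨hbotM, hCM⟩)
        (by rw [Finset.coe_insert]; exact hchain.insert fun b _ _ => Or.inl bot_le)
        (Finset.subset_insert _ _)
      rw [← h']
      exact Finset.mem_insert_self _ _
    have htopC : (⊤ : α) ∈ C := by
      have h' := hmax (insert ⊤ C)
        (by rw [Finset.coe_insert]; exact Set.insert_subset_iff.mpr ⟨htopM, hCM⟩)
        (by rw [Finset.coe_insert]; exact hchain.insert fun b _ _ => Or.inr le_top)
        (Finset.subset_insert _ _)
      rw [← h']
      exact Finset.mem_insert_self _ _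
    have hcomp : ∀ a ∈ C, ∀ b ∈ C, a ≤ b ∨ b ≤ a := by
      intro a ha b hb
      rcases eq_or_ne a b with rfl | hne
      · exact Or.inl le_rfl
      · exact hchain (Finset.mem_coe.mpr ha) (Finset.mem_coe.mpr hb) hne
    have hstep2 : ∀ x ∈ C, x ≠ ⊤ → ∃ y ∈ C, grade ℕ y = grade ℕ x + 1 := by
      intro x hxC hxt
      have hne : (C.filter (fun w => x < w)).Nonempty :=
        ⟨⊤, Finset.mem_filter.mpr ⟨htopC, lt_top_iff_ne_top.mpr hxt⟩⟩
      obtain ⟨y, hyCx, hymin'⟩ := Finset.exists_minimal hne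
      have hymin : ∀ w ∈ C.filter (fun w => x < w), ¬ w < y :=
        fun w hw hlt => hlt.not_ge (hymin' hw hlt.le)
      have hyC : y ∈ C := (Finset.mem_filter.mp hyCx).1
      have hxy : x < y := (Finset.mem_filter.mp hyCx).2
      have hyle : ∀ w ∈ C, x < w → y ≤ w := by
        intro w hwC hxw
        have hnlt := hymin w (Finset.mem_filter.mpr ⟨hwC, hxw⟩)
        rcases hcomp w hwC y hyC with h | h
        · exact le_of_eq (h.lt_or_eq.resolve_left hnlt).symm
        · exact h
      have hxM := hCM hxC
      have hx' : (∃ d, grade ℕ d = n - 1 ∧ d ≠ c ∧ x ≤ d) ∨ x = ⊤ := by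
        rw [hM] at hxM; exact hxM
      rcases hx' with ⟨d, hd1, hd2, hxd⟩ | rfl
      swap
      · exact absurd rfl hxt
      by_cases hyt : y = ⊤
      · rcases eq_or_ne x d with rfl | hnxd
        · refine ⟨⊤, htopC, ?_⟩
          rw [hrank, hd1]
          omega
        · exfalso
          have hxdlt : x < d := lt_of_le_of_ne hxd hnxd
          have hdM : d ∈ M := by rw [hM]; exact Or.inl ⟨d, hd1, hd2, le_rfl⟩
          have hdnC : d ∉ C := by
            intro hdC
            have h1 := hyle d hdC hxdlt
            rw [hyt] at h1
            have hdtop : d = ⊤ := top_le_iff.mp h1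
            rw [hdtop, hrank] at hd1
            omega
          have hchain' : IsChain (· ≤ ·) (↑(insert d C) : Set α) := by
            rw [Finset.coe_insert]
            apply hchain.insert
            intro b hbC hbd
            rcases hcomp b (Finset.mem_coe.mp hbC) x hxC with hbx | hxb
            · exact Or.inr (hbx.trans hxd)
            · rcases eq_or_ne x b with rfl | hnxb
              · exact Or.inr hxd
              · have h2 := hyle b (Finset.mem_coe.mp hbC) (lt_of_le_of_ne hxb hnxb)
                rw [hyt] at h2
                exact Or.inl (by rw [top_le_iff.mp h2]; exact le_top)
          have heq := hmax (insert d C)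
            (by rw [Finset.coe_insert]; exact Set.insert_subset_iff.mpr ⟨hdM, hCM⟩)
            hchain' (Finset.subset_insert _ _)
          exact hdnC (by rw [← heq]; exact Finset.mem_insert_self _ _)
      · have hyM := hCM hyC
        have hy' : (∃ d', grade ℕ d' = n - 1 ∧ d' ≠ c ∧ y ≤ d') ∨ y = ⊤ := by
          rw [hM] at hyM; exact hyM
        rcases hy' with ⟨d', hd'1, hd'2, hyd'⟩ | rfl
        swap
        · exact absurd rfl hyt
        have hcov : x ⋖ y := by
          refine ⟨hxy, ?_⟩
          intro z hxz hzy
          have hzM : z ∈ M := by rw [hM]; exact Or.inl ⟨d', hd'1, hd'2, hzy.le.trans hyd'⟩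
          have hznC : z ∉ C := by
            intro hzC
            exact absurd (hyle z hzC hxz) hzy.not_ge
          have hchain' : IsChain (· ≤ ·) (↑(insert z C) : Set α) := by
            rw [Finset.coe_insert]
            apply hchain.insert
            intro b hbC hbz
            rcases hcomp b (Finset.mem_coe.mp hbC) x hxC with hbx | hxb
            · exact Or.inr (hbx.trans hxz.le)
            · rcases eq_or_ne x b with rfl | hnxb
              · exact Or.inr hxz.le
              · exact Or.inl
                  ((hzy.trans_le (hyle b (Finset.mem_coe.mp hbC)
                    (lt_of_le_of_ne hxb hnxb))).le)
          have heq := hmax (insert z C)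
            (by rw [Finset.coe_insert]; exact Set.insert_subset_iff.mpr ⟨hzM, hCM⟩)
            hchain' (Finset.subset_insert _ _)
          exact hznC (by rw [← heq]; exact Finset.mem_insert_self _ _)
        have hgcov := CovBy.grade ℕ hcov
        exact ⟨y, hyC, (Order.covBy_iff_add_one_eq.mp hgcov).symm⟩
    have hall : ∀ i, i ≤ n → ∃ x ∈ C, grade ℕ x = i := by
      intro i
      induction i with
      | zero => intro _; exact ⟨⊥, hbotC, hgbot⟩
      | succ i ih =>
        intro hi
        obtain ⟨x, hxC, hxg⟩ := ih (by omega)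
        have hxt : x ≠ ⊤ := by
          intro h
          rw [h, hrank] at hxg
          omega
        obtain ⟨y, hyC, hyg⟩ := hstep2 x hxC hxt
        exact ⟨y, hyC, by omega⟩
    have himg : C.image (grade ℕ) = Finset.range (n + 1) := by
      apply Finset.Subset.antisymm
      · intro j hj
        obtain ⟨x, hxC, rfl⟩ := Finset.mem_image.mp hj
        have := hgle (le_top : x ≤ ⊤)
        rw [hrank] at this
        exact Finset.mem_range.mpr (by omega)
      · intro j hj
        obtain ⟨x, hxC, hxg⟩ := hall j (by have := Finset.mem_range.mp hj; omega)
        exact Finset.mem_image.mpr ⟨x, hxC, hxg⟩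
    have hinj : Set.InjOn (grade ℕ) (↑C : Set α) := by
      intro u hu v hv huv
      rcases hcomp u (Finset.mem_coe.mp hu) v (Finset.mem_coe.mp hv) with h | h
      · exact heqgrade h huv
      · exact (heqgrade h huv.symm).symm
    calc C.card = (C.image (grade ℕ)).card := (Finset.card_image_of_injOn hinj).symm
      _ = n + 1 := by rw [himg, Finset.card_range]
end
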